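/- arXiv:2308.01623 — 2 statements merged into one kernel-verified Lean document; each statement's English description precedes it below -/
import Mathlib

section
/- (Completeness of infinite-valued Łukasiewicz propositional logic, Theorem 4) For every formula φ of propositional Łukasiewicz logic, if ⊨ φ (i.e. V(φ) = 1 for every valuation V), then ⊢ φ (φ is derivable in the Hilbert system Ł). -/
/-- Formulas of propositional Łukasiewicz logic: propositional variables,
the constant `⊥`, strong conjunction `&` and implication `→`. -/
inductive LFormula : Type
  | var : ℕ → LFormula
  | bot : LFormula
  | conj : LFormula → LFormula → LFormula
  | impl : LFormula → LFormula → LFormula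

namespace LFormula

/-- Negation is the abbreviation `¬φ := φ → ⊥`. -/
def neg (φ : LFormula) : LFormula := impl φ bot

end LFormula

/-- Hilbert-style provability for Łukasiewicz logic `Ł` from a set of premises:
modus ponens together with the axiom schemes (A1)–(A7) and double negation. -/
inductive LProof : Set LFormula → LFormula → Prop
  | prem {Γ : Set LFormula} {φ : LFormula} : φ ∈ Γ → LProof Γ φ
  | a1 {Γ : Set LFormula} (φ ψ χ : LFormula) :
      LProof Γ ((φ.impl ψ).impl ((ψ.impl χ).impl (φ.impl χ)))
  | a2 {Γ : Set LFormula} (φ ψ : LFormula) : LProof Γ ((φ.conj ψ).impl φ)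
  | a3 {Γ : Set LFormula} (φ ψ : LFormula) : LProof Γ ((φ.conj ψ).impl (ψ.conj φ))
  | a4 {Γ : Set LFormula} (φ ψ : LFormula) :
      LProof Γ ((φ.conj (φ.impl ψ)).impl (ψ.conj (ψ.impl φ)))
  | a5a {Γ : Set LFormula} (φ ψ χ : LFormula) :
      LProof Γ ((φ.impl (ψ.impl χ)).impl ((φ.conj ψ).impl χ))
  | a5b {Γ : Set LFormula} (φ ψ χ : LFormula) :
      LProof Γ (((φ.conj ψ).impl χ).impl (φ.impl (ψ.impl χ)))
  | a6 {Γ : Set LFormula} (φ ψ χ : LFormula) :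
      LProof Γ (((φ.impl ψ).impl χ).impl (((ψ.impl φ).impl χ).impl χ))
  | a7 {Γ : Set LFormula} (φ : LFormula) : LProof Γ (LFormula.bot.impl φ)
  | dn {Γ : Set LFormula} (φ : LFormula) : LProof Γ (φ.neg.neg.impl φ)
  | mp {Γ : Set LFormula} {φ ψ : LFormula} :
      LProof Γ (φ.impl ψ) → LProof Γ φ → LProof Γ ψ

/-- `listConj φ [ψ₁, …, ψₙ]` is the strong conjunction `φ & ψ₁ & ⋯ & ψₙ`. -/
def listConj : LFormula → List LFormula → LFormula
  | φ, [] => φ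
  | φ, ψ :: l => LFormula.conj φ (listConj ψ l)

/-- A set `Γ` is consistent if for every finite nonempty collection
`φ, ψ₁, …, ψₙ` of its members, `⊬ ¬(φ & ψ₁ & ⋯ & ψₙ)`. -/
def Consistent (Γ : Set LFormula) : Prop :=
  ∀ (φ : LFormula) (l : List LFormula), φ ∈ Γ → (∀ ψ ∈ l, ψ ∈ Γ) →
    ¬ LProof ∅ (listConj φ l).neg

/-- A consistent set `Φ` is maximal if adjoining any formula `ψ ∉ Φ`
yields an inconsistent set. -/
def MaximalConsistent (Φ : Set LFormula) : Prop :=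
  Consistent Φ ∧ ∀ ψ : LFormula, ψ ∉ Φ → ¬ Consistent (Φ ∪ {ψ})

/-- Evaluation of formulas in `[0,1]` determined by the values `π` of the
propositional variables. -/
def eval (π : ℕ → ℝ) : LFormula → ℝ
  | LFormula.var p => π p
  | LFormula.bot => 0
  | LFormula.conj φ ψ => max 0 (eval π φ + eval π ψ - 1)
  | LFormula.impl φ ψ => min 1 (1 - eval π φ + eval π ψ)

/-- A valuation assigns each propositional variable a value in `[0,1]`. -/
def IsValuation (π : ℕ → ℝ) : Prop := ∀ p : ℕ, 0 ≤ π p ∧ π p ≤ 1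

/- ### Section 1 : derived rules of Ł -/

open LFormula

namespace LK

variable {Γ : Set LFormula} {A B C D Z : LFormula}

/-- composition of provable implications -/
theorem comp (h1 : LProof Γ (A.impl B)) (h2 : LProof Γ (B.impl C)) :
    LProof Γ (A.impl C) :=
  ((LProof.a1 A B C).mp h1).mp h2

theorem wk (A B : LFormula) : LProof Γ (A.impl (B.impl A)) :=
  (LProof.a5b A B A).mp (LProof.a2 A B)

theorem botbot : LProof Γ (LFormula.bot.impl LFormula.bot) := LProof.a7 _

theorem lid (A : LFormula) : LProof Γ (A.impl A) := by
  have h1 : LProof Γ (((LFormula.bot.impl LFormula.bot).conj A).impl A) :=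
    comp (LProof.a3 _ A) (LProof.a2 A _)
  exact ((LProof.a5b _ A A).mp h1).mp botbot

theorem preS (A B C : LFormula) :
    LProof Γ (((A.conj B).impl C).impl ((B.conj A).impl C)) :=
  (LProof.a1 (B.conj A) (A.conj B) C).mp (LProof.a3 B A)

theorem perm (A B C : LFormula) :
    LProof Γ ((A.impl (B.impl C)).impl (B.impl (A.impl C))) :=
  comp (LProof.a5a A B C) (comp (preS A B C) (LProof.a5b B A C))

theorem permRule (h : LProof Γ (A.impl (B.impl C))) : LProof Γ (B.impl (A.impl C)) :=
  (perm A B C).mp h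

theorem prefixThm (A B C : LFormula) :
    LProof Γ ((B.impl C).impl ((A.impl B).impl (A.impl C))) :=
  permRule (LProof.a1 A B C)

/-- from `B→C` infer `(A→B)→(A→C)` -/
theorem prefixMp (h : LProof Γ (B.impl C)) : LProof Γ ((A.impl B).impl (A.impl C)) :=
  (prefixThm _ B C).mp h

/-- from `A→B` infer `(B→C)→(A→C)` -/
theorem suffixMp (h : LProof Γ (A.impl B)) : LProof Γ ((B.impl C).impl (A.impl C)) :=
  (LProof.a1 A B C).mp h

theorem axmp (A B : LFormula) : LProof Γ (A.impl ((A.impl B).impl B)) :=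
  permRule (lid (A.impl B))

/-- from `P→(Q→R)` and `Q` infer `P→R` -/
theorem mp2 (h1 : LProof Γ (A.impl (B.impl C))) (h2 : LProof Γ B) :
    LProof Γ (A.impl C) :=
  (permRule h1).mp h2

theorem topPf : LProof Γ (LFormula.bot.neg) := LProof.a7 _

theorem toTop (A : LFormula) : LProof Γ (A.impl LFormula.bot.neg) :=
  (wk _ A).mp topPf

theorem fromTop (A : LFormula) : LProof Γ ((LFormula.bot.neg.impl A).impl A) :=
  (axmp _ A).mp topPf

theorem dni (A : LFormula) : LProof Γ (A.impl A.neg.neg) := axmp A LFormula.bot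

theorem contrap1 (A B : LFormula) : LProof Γ ((A.impl B).impl (B.neg.impl A.neg)) :=
  LProof.a1 A B LFormula.bot

theorem contrap2 (A B : LFormula) : LProof Γ ((A.neg.impl B.neg).impl (B.impl A)) := by
  have c1 : LProof Γ ((A.neg.impl B.neg).impl (B.neg.neg.impl A.neg.neg)) :=
    LProof.a1 A.neg B.neg LFormula.bot
  have m1 : LProof Γ ((B.neg.neg.impl A.neg.neg).impl (B.impl A.neg.neg)) :=
    suffixMp (dni B)
  have m2 : LProof Γ ((B.impl A.neg.neg).impl (B.impl A)) := prefixMp (LProof.dn A)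
  exact comp c1 (comp m1 m2)

theorem conjIntro (A B : LFormula) : LProof Γ (A.impl (B.impl (A.conj B))) :=
  (LProof.a5b A B (A.conj B)).mp (lid _)

theorem mono1 (A B C : LFormula) :
    LProof Γ ((A.impl B).impl ((A.conj C).impl (B.conj C))) := by
  have s1 : LProof Γ ((A.impl B).impl (A.impl (C.impl (B.conj C)))) :=
    prefixMp (conjIntro B C)
  exact comp s1 (LProof.a5a A C (B.conj C))

theorem mono2 (A B C : LFormula) :
    LProof Γ ((A.impl B).impl ((C.conj A).impl (C.conj B))) := by
  have m : LProof Γ (((A.conj C).impl (B.conj C)).impl ((C.conj A).impl (B.conj C))) :=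
    suffixMp (LProof.a3 C A)
  have p : LProof Γ (((C.conj A).impl (B.conj C)).impl ((C.conj A).impl (C.conj B))) :=
    prefixMp (LProof.a3 B C)
  exact comp (mono1 A B C) (comp m p)

theorem conjMono (h1 : LProof Γ (A.impl B)) (h2 : LProof Γ (C.impl D)) :
    LProof Γ ((A.conj C).impl (B.conj D)) :=
  comp ((mono1 A B C).mp h1) ((mono2 C D B).mp h2)

theorem negConj1 (A B : LFormula) : LProof Γ ((A.conj B).neg.impl (A.impl B.neg)) :=
  LProof.a5b A B LFormula.bot

theorem negConj2 (A B : LFormula) : LProof Γ ((A.impl B.neg).impl (A.conj B).neg) :=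
  LProof.a5a A B LFormula.bot

/-- the core contraposition-of-A4 lemma -/
theorem lk3core (X Y : LFormula) :
    LProof Γ (((Y.impl X).impl Y.neg).impl ((X.impl Y).impl X.neg)) := by
  have p1 : LProof Γ (((Y.impl X).impl Y.neg).impl ((Y.impl X).conj Y).neg) :=
    LProof.a5a (Y.impl X) Y LFormula.bot
  have p2 : LProof Γ (((Y.impl X).conj Y).neg.impl (Y.conj (Y.impl X)).neg) :=
    (contrap1 _ _).mp (LProof.a3 Y (Y.impl X))
  have p3 : LProof Γ ((Y.conj (Y.impl X)).neg.impl (X.conj (X.impl Y)).neg) :=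
    (contrap1 _ _).mp (LProof.a4 X Y)
  have p4 : LProof Γ ((X.conj (X.impl Y)).neg.impl ((X.impl Y).conj X).neg) :=
    (contrap1 _ _).mp (LProof.a3 (X.impl Y) X)
  have p5 : LProof Γ (((X.impl Y).conj X).neg.impl ((X.impl Y).impl X.neg)) :=
    LProof.a5b (X.impl Y) X LFormula.bot
  exact comp p1 (comp p2 (comp p3 (comp p4 p5)))

/-- Wajsberg axiom Ł3 : `((A→B)→B)→((B→A)→A)` -/
theorem lk3 (A B : LFormula) :
    LProof Γ (((A.impl B).impl B).impl ((B.impl A).impl A)) := by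
  have i1 : LProof Γ (((A.impl B).impl B).impl ((B.neg.impl A.neg).impl B)) :=
    suffixMp (contrap2 B A)
  have i2 : LProof Γ (((B.neg.impl A.neg).impl B).impl ((B.neg.impl A.neg).impl B.neg.neg)) :=
    prefixMp (dni B)
  have i3 := lk3core (Γ := Γ) A.neg B.neg
  have i4 : LProof Γ (((A.neg.impl B.neg).impl A.neg.neg).impl ((A.neg.impl B.neg).impl A)) :=
    prefixMp (LProof.dn A)
  have i5 : LProof Γ (((A.neg.impl B.neg).impl A).impl ((B.impl A).impl A)) :=
    suffixMp (contrap1 B A)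
  exact comp i1 (comp i2 (comp i3 (comp i4 i5)))

/-- case rule from A6 -/
theorem a6rule (h1 : LProof Γ ((A.impl B).impl Z)) (h2 : LProof Γ ((B.impl A).impl Z)) :
    LProof Γ Z :=
  ((LProof.a6 A B Z).mp h1).mp h2

/-- `or' A B = (A→B)→B` -/
def or' (A B : LFormula) : LFormula := (A.impl B).impl B

theorem orIntroL (A B : LFormula) : LProof Γ (A.impl (or' A B)) := axmp A B

theorem orIntroR (A B : LFormula) : LProof Γ (B.impl (or' A B)) := wk B (A.impl B)

theorem orElim (h1 : LProof Γ (A.impl C)) (h2 : LProof Γ (B.impl C)) :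
    LProof Γ ((or' A B).impl C) := by
  have case1 : LProof Γ ((A.impl B).impl ((or' A B).impl C)) :=
    comp (axmp (A.impl B) B) (prefixMp h2)
  have case2 : LProof Γ ((B.impl A).impl ((or' A B).impl C)) :=
    comp (permRule (lk3 A B)) (prefixMp h1)
  exact a6rule case1 case2

theorem orBase (A B : LFormula) : LProof Γ (or' (A.impl B) (B.impl A)) :=
  a6rule (axmp (A.impl B) (B.impl A)) (wk (B.impl A) ((A.impl B).impl (B.impl A)))

theorem orMonoRule (h1 : LProof Γ (A.impl C)) (h2 : LProof Γ (B.impl D)) :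
    LProof Γ ((or' A B).impl (or' C D)) :=
  orElim (comp h1 (orIntroL C D)) (comp h2 (orIntroR C D))

/-- distribution : `C & (A ∨ B) → (C&A) ∨ (C&B)` -/
theorem distLem (A B C : LFormula) :
    LProof Γ ((C.conj (or' A B)).impl (or' (C.conj A) (C.conj B))) := by
  have s1 : LProof Γ ((A.impl B).impl ((or' A B).impl B)) := axmp (A.impl B) B
  have case1 : LProof Γ ((A.impl B).impl ((C.conj (or' A B)).impl (or' (C.conj A) (C.conj B)))) :=
    comp (comp s1 (mono2 (or' A B) B C)) (prefixMp (orIntroR _ _))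
  have t1 : LProof Γ ((B.impl A).impl ((or' A B).impl A)) := permRule (lk3 A B)
  have case2 : LProof Γ ((B.impl A).impl ((C.conj (or' A B)).impl (or' (C.conj A) (C.conj B)))) :=
    comp (comp t1 (mono2 (or' A B) A C)) (prefixMp (orIntroL _ _))
  exact a6rule case1 case2

/-- `A & B → A² ∨ B²` -/
theorem conjOrSq (A B : LFormula) :
    LProof Γ ((A.conj B).impl (or' (A.conj A) (B.conj B))) := by
  have case1 : LProof Γ ((A.impl B).impl ((A.conj B).impl (or' (A.conj A) (B.conj B)))) :=
    comp (mono1 A B B) (prefixMp (orIntroR _ _))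
  have case2 : LProof Γ ((B.impl A).impl ((A.conj B).impl (or' (A.conj A) (B.conj B)))) :=
    comp (mono2 B A A) (prefixMp (orIntroL _ _))
  exact a6rule case1 case2

/-- squaring a disjunction : `(A∨B)&(A∨B) → A² ∨ B²` -/
theorem sqOr (A B : LFormula) :
    LProof Γ (((or' A B).conj (or' A B)).impl (or' (A.conj A) (B.conj B))) := by
  have branch1 : LProof Γ (((or' A B).conj A).impl (or' (A.conj A) (B.conj B))) :=
    comp (LProof.a3 _ A) (comp (distLem A B A)
      (orElim (orIntroL _ _) (conjOrSq A B)))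
  have branch2 : LProof Γ (((or' A B).conj B).impl (or' (A.conj A) (B.conj B))) :=
    comp (LProof.a3 _ B) (comp (distLem A B B)
      (orElim (comp (LProof.a3 B A) (conjOrSq A B)) (orIntroR _ _)))
  exact comp (distLem A B (or' A B)) (orElim branch1 branch2)

theorem sqRule (h : LProof Γ A) : LProof Γ (A.conj A) :=
  ((conjIntro A A).mp h).mp h

/-- iterated squaring -/
def sqIter (A : LFormula) : ℕ → LFormula
  | 0 => A
  | n+1 => (sqIter A n).conj (sqIter A n)

theorem powOrRule (h : LProof Γ (or' A B)) (j : ℕ) :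
    LProof Γ (or' (sqIter A j) (sqIter B j)) := by
  induction j with
  | zero => exact h
  | succ n ih => exact (sqOr _ _).mp (sqRule ih)

/-- strong-conjunction powers, `conjPow A n = A & ⋯ & A & ⊤` -/
def conjPow (A : LFormula) : ℕ → LFormula
  | 0 => LFormula.bot.neg
  | n+1 => A.conj (conjPow A n)

theorem topConj (A : LFormula) : LProof Γ ((LFormula.bot.neg.conj A).impl A) :=
  comp (LProof.a3 _ A) (LProof.a2 A _)

theorem toTopConj (A : LFormula) : LProof Γ (A.impl (LFormula.bot.neg.conj A)) :=
  (conjIntro LFormula.bot.neg A).mp topPf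

theorem conjTopIntro (A : LFormula) : LProof Γ (A.impl (A.conj LFormula.bot.neg)) :=
  (permRule (conjIntro A LFormula.bot.neg)).mp topPf

theorem assoc1 (X Y Z : LFormula) :
    LProof Γ (((X.conj Y).conj Z).impl (X.conj (Y.conj Z))) := by
  set T := X.conj (Y.conj Z) with hT
  have c1 : LProof Γ (Y.impl (Z.impl (Y.conj Z))) := conjIntro Y Z
  have c2 : LProof Γ (X.impl ((Y.conj Z).impl T)) := conjIntro X (Y.conj Z)
  have r0 : LProof Γ (Y.impl (Z.impl (X.impl T))) :=
    comp c1 (prefixMp (permRule c2))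
  have r1 : LProof Γ (Y.impl (X.impl (Z.impl T))) :=
    comp r0 (perm Z X T)
  have r2 : LProof Γ (X.impl (Y.impl (Z.impl T))) := permRule r1
  exact (LProof.a5a (X.conj Y) Z T).mp ((LProof.a5a X Y (Z.impl T)).mp r2)

theorem assoc2 (X Y Z : LFormula) :
    LProof Γ ((X.conj (Y.conj Z)).impl ((X.conj Y).conj Z)) := by
  have h1 : LProof Γ ((X.conj (Y.conj Z)).impl ((Y.conj Z).conj X)) := LProof.a3 _ _
  have h2 : LProof Γ (((Y.conj Z).conj X).impl (Y.conj (Z.conj X))) := assoc1 Y Z X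
  have h3 : LProof Γ ((Y.conj (Z.conj X)).impl ((Z.conj X).conj Y)) := LProof.a3 _ _
  have h4 : LProof Γ (((Z.conj X).conj Y).impl (Z.conj (X.conj Y))) := assoc1 Z X Y
  have h5 : LProof Γ ((Z.conj (X.conj Y)).impl ((X.conj Y).conj Z)) := LProof.a3 _ _
  exact comp h1 (comp h2 (comp h3 (comp h4 h5)))

theorem powAdd (A : LFormula) (m n : ℕ) :
    LProof Γ (((conjPow A m).conj (conjPow A n)).impl (conjPow A (m+n))) := by
  induction m with
  | zero => simpa [conjPow] using topConj (conjPow A n)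
  | succ k ih =>
      have h1 : LProof Γ (((A.conj (conjPow A k)).conj (conjPow A n)).impl
          (A.conj ((conjPow A k).conj (conjPow A n)))) := assoc1 _ _ _
      have h2 := (mono2 ((conjPow A k).conj (conjPow A n)) (conjPow A (k+n)) A).mp ih
      have : LProof Γ (((A.conj (conjPow A k)).conj (conjPow A n)).impl
          (A.conj (conjPow A (k+n)))) := comp h1 h2
      simpa [conjPow, Nat.succ_add] using this

theorem powSplit (A : LFormula) (m n : ℕ) :
    LProof Γ ((conjPow A (m+n)).impl ((conjPow A m).conj (conjPow A n))) := by
  induction m with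
  | zero => simpa [conjPow] using toTopConj (conjPow A n)
  | succ k ih =>
      have h2 := (mono2 (conjPow A (k+n)) ((conjPow A k).conj (conjPow A n)) A).mp ih
      have h1 : LProof Γ ((A.conj ((conjPow A k).conj (conjPow A n))).impl
          ((A.conj (conjPow A k)).conj (conjPow A n))) := assoc2 _ _ _
      have : LProof Γ ((conjPow A (k+n+1)).impl ((conjPow A (k+1)).conj (conjPow A n))) :=
        comp h2 h1
      simpa [Nat.succ_add] using this

theorem powMono (A : LFormula) {m n : ℕ} (h : n ≤ m) :
    LProof Γ ((conjPow A m).impl (conjPow A n)) := by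
  obtain ⟨k, rfl⟩ := Nat.exists_eq_add_of_le h
  exact comp (powSplit A n k) (LProof.a2 _ _)

theorem sqIter_to_pow (A : LFormula) (j : ℕ) :
    LProof Γ ((sqIter A j).impl (conjPow A (2^j))) := by
  induction j with
  | zero => simpa [sqIter, conjPow] using conjTopIntro A
  | succ k ih =>
      have h1 : LProof Γ ((sqIter A (k+1)).impl
          ((conjPow A (2^k)).conj (conjPow A (2^k)))) := conjMono ih ih
      have h2 := powAdd (Γ := Γ) A (2^k) (2^k)
      have := comp h1 h2
      have h3 : 2^k + 2^k = 2^(k+1) := by ring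
      rw [h3] at this
      exact this

theorem powIntro (h : LProof Γ A) (n : ℕ) : LProof Γ (conjPow A n) := by
  induction n with
  | zero => exact topPf
  | succ k ih => exact ((conjIntro _ _).mp h).mp ih

end LK

/- ### Section 2 : deduction theorem, Lindenbaum extension -/

namespace LK

variable {Γ Δ : Set LFormula} {A B C Z α β φ ψ : LFormula}

theorem lmono (h : LProof Γ A) (hs : Γ ⊆ Δ) : LProof Δ A := by
  induction h with
  | prem h => exact LProof.prem (hs h)
  | a1 _ _ _ => exact LProof.a1 _ _ _
  | a2 _ _ => exact LProof.a2 _ _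
  | a3 _ _ => exact LProof.a3 _ _
  | a4 _ _ => exact LProof.a4 _ _
  | a5a _ _ _ => exact LProof.a5a _ _ _
  | a5b _ _ _ => exact LProof.a5b _ _ _
  | a6 _ _ _ => exact LProof.a6 _ _ _
  | a7 _ => exact LProof.a7 _
  | dn _ => exact LProof.dn _
  | mp _ _ ih1 ih2 => exact ih1.mp ih2

/-- local deduction theorem -/
theorem ldt_aux (h : LProof Δ B) :
    ∀ Γ α, Δ = insert α Γ → ∃ n, LProof Γ ((conjPow α n).impl B) := by
  induction h with
  | prem h =>
      rename_i ψ
      intro Γ α hΔ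
      subst hΔ
      rcases h with h | h
      · exact ⟨1, by simpa [conjPow, h] using LProof.a2 α LFormula.bot.neg⟩
      · exact ⟨1, (wk ψ _).mp (LProof.prem h)⟩
  | a1 _ _ _ => exact fun Γ α _ => ⟨0, (wk _ _).mp (LProof.a1 _ _ _)⟩
  | a2 _ _ => exact fun Γ α _ => ⟨0, (wk _ _).mp (LProof.a2 _ _)⟩
  | a3 _ _ => exact fun Γ α _ => ⟨0, (wk _ _).mp (LProof.a3 _ _)⟩
  | a4 _ _ => exact fun Γ α _ => ⟨0, (wk _ _).mp (LProof.a4 _ _)⟩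
  | a5a _ _ _ => exact fun Γ α _ => ⟨0, (wk _ _).mp (LProof.a5a _ _ _)⟩
  | a5b _ _ _ => exact fun Γ α _ => ⟨0, (wk _ _).mp (LProof.a5b _ _ _)⟩
  | a6 _ _ _ => exact fun Γ α _ => ⟨0, (wk _ _).mp (LProof.a6 _ _ _)⟩
  | a7 _ => exact fun Γ α _ => ⟨0, (wk _ _).mp (LProof.a7 _)⟩
  | dn _ => exact fun Γ α _ => ⟨0, (wk _ _).mp (LProof.dn _)⟩
  | mp h1 h2 ih1 ih2 =>
      rename_i ψ χ
      intro Γ α hΔ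
      obtain ⟨n, hn⟩ := ih1 Γ α hΔ
      obtain ⟨m, hm⟩ := ih2 Γ α hΔ
      refine ⟨n + m, ?_⟩
      have s1 : LProof Γ ((conjPow α (n+m)).impl ((conjPow α n).conj (conjPow α m))) :=
        powSplit α n m
      have s2 : LProof Γ (((conjPow α n).conj (conjPow α m)).impl ((conjPow α n).conj ψ)) :=
        (mono2 _ _ _).mp hm
      have s3 : LProof Γ (((conjPow α n).conj ψ).impl χ) :=
        (LProof.a5a (conjPow α n) ψ χ).mp hn
      exact comp s1 (comp s2 s3)

theorem ldt (h : LProof (insert α Γ) B) : ∃ n, LProof Γ ((conjPow α n).impl B) :=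
  ldt_aux h Γ α rfl

theorem lcut (h : LProof (insert α Γ) B) (hα : LProof Γ α) : LProof Γ B := by
  obtain ⟨n, hn⟩ := ldt h
  exact hn.mp (powIntro hα n)

theorem lfin (h : LProof Γ A) : ∃ s : Set LFormula, s ⊆ Γ ∧ s.Finite ∧ LProof s A := by
  induction h with
  | prem h =>
      rename_i ψ
      exact ⟨{ψ}, by simpa using h, Set.finite_singleton _, LProof.prem rfl⟩
  | a1 _ _ _ => exact ⟨∅, by simp, Set.finite_empty, LProof.a1 _ _ _⟩
  | a2 _ _ => exact ⟨∅, by simp, Set.finite_empty, LProof.a2 _ _⟩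
  | a3 _ _ => exact ⟨∅, by simp, Set.finite_empty, LProof.a3 _ _⟩
  | a4 _ _ => exact ⟨∅, by simp, Set.finite_empty, LProof.a4 _ _⟩
  | a5a _ _ _ => exact ⟨∅, by simp, Set.finite_empty, LProof.a5a _ _ _⟩
  | a5b _ _ _ => exact ⟨∅, by simp, Set.finite_empty, LProof.a5b _ _ _⟩
  | a6 _ _ _ => exact ⟨∅, by simp, Set.finite_empty, LProof.a6 _ _ _⟩
  | a7 _ => exact ⟨∅, by simp, Set.finite_empty, LProof.a7 _⟩
  | dn _ => exact ⟨∅, by simp, Set.finite_empty, LProof.dn _⟩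
  | mp h1 h2 ih1 ih2 =>
      obtain ⟨s1, hs1, hf1, hp1⟩ := ih1
      obtain ⟨s2, hs2, hf2, hp2⟩ := ih2
      exact ⟨s1 ∪ s2, Set.union_subset hs1 hs2, hf1.union hf2,
        (lmono hp1 Set.subset_union_left).mp (lmono hp2 Set.subset_union_right)⟩

/-- a finite set contained in the union of a chain is contained in a member -/
theorem chain_finite_subset {c : Set (Set LFormula)} (hc : IsChain (· ⊆ ·) c)
    (hne : c.Nonempty) {s : Set LFormula} (hfin : s.Finite) (hsub : s ⊆ ⋃₀ c) :
    ∃ t ∈ c, s ⊆ t := by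
  revert hsub
  refine Set.Finite.induction_on s hfin ?_ ?_
  · exact fun _ => ⟨hne.choose, hne.choose_spec, by simp⟩
  · intro a s _ _ ih hsub
    obtain ⟨t1, ht1, hst1⟩ := ih (fun x hx => hsub (Set.mem_insert_of_mem _ hx))
    obtain ⟨t2, ht2, hat2⟩ := hsub (Set.mem_insert a s)
    rcases eq_or_ne t1 t2 with rfl | hne'
    · exact ⟨t1, ht1, Set.insert_subset hat2 hst1⟩
    rcases hc ht1 ht2 hne' with h | h
    · exact ⟨t2, ht2, Set.insert_subset hat2 (hst1.trans h)⟩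
    · exact ⟨t1, ht1, Set.insert_subset (h hat2) hst1⟩

variable (φ)

/-- the Lindenbaum construction : a maximal theory not proving φ -/
theorem lindenbaum (hφ : ¬ LProof ∅ φ) :
    ∃ Φ : Set LFormula, ¬ LProof Φ φ ∧
      (∀ Δ, ¬ LProof Δ φ → Φ ⊆ Δ → Δ = Φ) := by
  have := zorn_subset_nonempty {Γ : Set LFormula | ¬ LProof Γ φ} ?_ ∅ hφ
  · obtain ⟨Φ, -, hmax⟩ := this
    exact ⟨Φ, hmax.prop, fun Δ hΔ hsub => Set.Subset.antisymm (hmax.2 hΔ hsub) hsub⟩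
  · intro c hcsub hchain hcne
    refine ⟨⋃₀ c, ?_, fun s hs => Set.subset_sUnion_of_mem hs⟩
    intro hproof
    obtain ⟨s, hssub, hsfin, hsp⟩ := lfin hproof
    obtain ⟨t, htc, hst⟩ := chain_finite_subset hchain hcne hsfin hssub
    exact (hcsub htc) (lmono hsp hst)

end LK

/- ### Section 3 : the prime theory and the quotient chain C -/

namespace LK

variable {A B Z α β φ ψ : LFormula}

/-- a good theory : deductively closed, prime, consistent -/
structure Good (Φ : Set LFormula) : Prop where
  closed : ∀ ψ, LProof Φ ψ → ψ ∈ Φ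
  prime : ∀ A B : LFormula, (A.impl B) ∈ Φ ∨ (B.impl A) ∈ Φ
  nbot : LFormula.bot ∉ Φ

theorem good_of_lindenbaum {φ : LFormula} (hφ : ¬ LProof ∅ φ) :
    ∃ Φ : Set LFormula, Good Φ ∧ φ ∉ Φ := by
  obtain ⟨Φ, hnp, hmax⟩ := lindenbaum φ hφ
  have closed : ∀ ψ, LProof Φ ψ → ψ ∈ Φ := by
    intro ψ hψ
    have h1 : ¬ LProof (insert ψ Φ) φ := fun hpf => hnp (lcut hpf hψ)
    have h2 := hmax _ h1 (Set.subset_insert ψ Φ)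
    rw [← h2]; exact Set.mem_insert ψ Φ
  refine ⟨Φ, ⟨closed, ?_, ?_⟩, fun hmem => hnp (LProof.prem hmem)⟩
  · intro A B
    by_contra hne
    push_neg at hne
    obtain ⟨hU, hV⟩ := hne
    set U := A.impl B
    set V := B.impl A
    have pU : LProof (insert U Φ) φ := by
      by_contra hc
      exact hU (by rw [← hmax _ hc (Set.subset_insert U Φ)]; exact Set.mem_insert U Φ)
    have pV : LProof (insert V Φ) φ := by
      by_contra hc
      exact hV (by rw [← hmax _ hc (Set.subset_insert V Φ)]; exact Set.mem_insert V Φ)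
    obtain ⟨n, hn⟩ := ldt pU
    obtain ⟨m, hm⟩ := ldt pV
    set j := n + m
    have hnj : n ≤ 2 ^ j := le_of_lt (lt_of_le_of_lt (Nat.le_add_right n m) Nat.lt_two_pow_self)
    have hmj : m ≤ 2 ^ j := le_of_lt (lt_of_le_of_lt (Nat.le_add_left m n) Nat.lt_two_pow_self)
    have cU : LProof Φ ((sqIter U j).impl φ) :=
      comp (sqIter_to_pow U j) (comp (powMono U hnj) hn)
    have cV : LProof Φ ((sqIter V j).impl φ) :=
      comp (sqIter_to_pow V j) (comp (powMono V hmj) hm)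
    have hor : LProof Φ (or' (sqIter U j) (sqIter V j)) := powOrRule (orBase A B) j
    exact hnp ((orElim cU cV).mp hor)
  · intro hb
    exact hnp ((LProof.a7 φ).mp (LProof.prem hb))

variable {Φ : Set LFormula}

theorem Good.memP (hG : Good Φ) (h : ψ ∈ Φ) : LProof Φ ψ := LProof.prem h

theorem Good.pmem (hG : Good Φ) (h : LProof Φ ψ) : ψ ∈ Φ := hG.closed _ h

/-- the Lindenbaum equivalence -/
def lsetoid (hG : Good Φ) : Setoid LFormula where
  r A B := (A.impl B) ∈ Φ ∧ (B.impl A) ∈ Φ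
  iseqv := by
    refine ⟨fun A => ⟨hG.pmem (lid A), hG.pmem (lid A)⟩, fun h => ⟨h.2, h.1⟩, ?_⟩
    rintro A B C ⟨h1, h2⟩ ⟨h3, h4⟩
    exact ⟨hG.pmem (comp (hG.memP h1) (hG.memP h3)),
           hG.pmem (comp (hG.memP h4) (hG.memP h2))⟩

def CQ (hG : Good Φ) := Quotient (lsetoid hG)

variable (hG : Good Φ)

def mkC (A : LFormula) : CQ hG := Quotient.mk (lsetoid hG) A

theorem congr_impl {a₁ a₂ b₁ b₂ : LFormula}
    (ha : (lsetoid hG).r a₁ a₂) (hb : (lsetoid hG).r b₁ b₂) :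
    (lsetoid hG).r (a₁.impl b₁) (a₂.impl b₂) := by
  constructor
  · exact hG.pmem (comp (suffixMp (hG.memP ha.2)) ((prefixThm a₂ b₁ b₂).mp (hG.memP hb.1)))
  · exact hG.pmem (comp (suffixMp (hG.memP ha.1)) ((prefixThm a₁ b₂ b₁).mp (hG.memP hb.2)))

theorem congr_conj {a₁ a₂ b₁ b₂ : LFormula}
    (ha : (lsetoid hG).r a₁ a₂) (hb : (lsetoid hG).r b₁ b₂) :
    (lsetoid hG).r (a₁.conj b₁) (a₂.conj b₂) :=
  ⟨hG.pmem (conjMono (hG.memP ha.1) (hG.memP hb.1)),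
   hG.pmem (conjMono (hG.memP ha.2) (hG.memP hb.2))⟩

def cimp : CQ hG → CQ hG → CQ hG :=
  Quotient.map₂ LFormula.impl (fun _ _ ha _ _ hb => congr_impl hG ha hb)

def cconj : CQ hG → CQ hG → CQ hG :=
  Quotient.map₂ LFormula.conj (fun _ _ ha _ _ hb => congr_conj hG ha hb)

def cneg : CQ hG → CQ hG := fun x => cimp hG x (mkC hG LFormula.bot)

def c0 : CQ hG := mkC hG LFormula.bot
def c1 : CQ hG := mkC hG LFormula.bot.neg

def cle : CQ hG → CQ hG → Prop :=
  Quotient.lift₂ (fun A B => (A.impl B) ∈ Φ) (by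
    intro a₁ b₁ a₂ b₂ ha hb
    have h1 := congr_impl hG ha hb
    exact propext ⟨fun h => hG.pmem ((hG.memP h1.1).mp (hG.memP h)),
                   fun h => hG.pmem ((hG.memP h1.2).mp (hG.memP h))⟩)

@[simp] theorem cimp_mk (A B : LFormula) :
    cimp hG (mkC hG A) (mkC hG B) = mkC hG (A.impl B) := rfl
@[simp] theorem cconj_mk (A B : LFormula) :
    cconj hG (mkC hG A) (mkC hG B) = mkC hG (A.conj B) := rfl
@[simp] theorem cneg_mk (A : LFormula) :
    cneg hG (mkC hG A) = mkC hG A.neg := rfl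
@[simp] theorem cle_mk (A B : LFormula) :
    cle hG (mkC hG A) (mkC hG B) ↔ (A.impl B) ∈ Φ := Iff.rfl

theorem csound {A B : LFormula} (h1 : (A.impl B) ∈ Φ) (h2 : (B.impl A) ∈ Φ) :
    mkC hG A = mkC hG B := Quotient.sound ⟨h1, h2⟩

theorem cind (p : CQ hG → Prop) (h : ∀ A, p (mkC hG A)) : ∀ x, p x :=
  fun x => Quotient.inductionOn x h

theorem cle_refl (x : CQ hG) : cle hG x x := by
  induction x using Quotient.inductionOn with
  | _ A => exact hG.pmem (lid A)

theorem cle_trans {x y z : CQ hG} (h1 : cle hG x y) (h2 : cle hG y z) : cle hG x z := by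
  induction x using Quotient.inductionOn with | _ A =>
  induction y using Quotient.inductionOn with | _ B =>
  induction z using Quotient.inductionOn with | _ C =>
  exact hG.pmem (comp (hG.memP h1) (hG.memP h2))

theorem cle_antisymm {x y : CQ hG} (h1 : cle hG x y) (h2 : cle hG y x) : x = y := by
  induction x using Quotient.inductionOn with | _ A =>
  induction y using Quotient.inductionOn with | _ B =>
  exact csound hG h1 h2

theorem cle_total (x y : CQ hG) : cle hG x y ∨ cle hG y x := by
  induction x using Quotient.inductionOn with | _ A =>
  induction y using Quotient.inductionOn with | _ B =>
  exact hG.prime A B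

theorem czero_le (x : CQ hG) : cle hG (c0 hG) x := by
  induction x using Quotient.inductionOn with | _ A =>
  exact hG.pmem (LProof.a7 A)

theorem cle_one (x : CQ hG) : cle hG x (c1 hG) := by
  induction x using Quotient.inductionOn with | _ A =>
  exact hG.pmem (toTop A)

theorem eq_one_iff {A : LFormula} : mkC hG A = c1 hG ↔ A ∈ Φ := by
  constructor
  · intro h
    have : cle hG (c1 hG) (mkC hG A) := h ▸ cle_refl hG _
    exact hG.pmem ((hG.memP this).mp topPf)
  · intro h
    exact cle_antisymm hG (cle_one hG _) ((cle_mk hG _ _).2 (hG.pmem ((wk A _).mp (LProof.prem h))))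

theorem cle_iff_imp_eq_one {x y : CQ hG} : cle hG x y ↔ cimp hG x y = c1 hG := by
  induction x using Quotient.inductionOn with | _ A =>
  induction y using Quotient.inductionOn with | _ B =>
  exact (eq_one_iff hG (A := A.impl B)).symm

theorem c0_ne_c1 : c0 hG ≠ c1 hG := by
  intro h
  exact hG.nbot ((eq_one_iff hG).1 h)

theorem resid {x y z : CQ hG} : cle hG (cconj hG x y) z ↔ cle hG x (cimp hG y z) := by
  induction x using Quotient.inductionOn with | _ A =>
  induction y using Quotient.inductionOn with | _ B =>
  induction z using Quotient.inductionOn with | _ C =>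
  exact ⟨fun h => hG.pmem ((LProof.a5b A B C).mp (hG.memP h)),
         fun h => hG.pmem ((LProof.a5a A B C).mp (hG.memP h))⟩

theorem cmul_comm (x y : CQ hG) : cconj hG x y = cconj hG y x := by
  induction x using Quotient.inductionOn with | _ A =>
  induction y using Quotient.inductionOn with | _ B =>
  exact csound hG (hG.pmem (LProof.a3 A B)) (hG.pmem (LProof.a3 B A))

theorem cmul_assoc (x y z : CQ hG) :
    cconj hG (cconj hG x y) z = cconj hG x (cconj hG y z) := by
  induction x using Quotient.inductionOn with | _ A =>
  induction y using Quotient.inductionOn with | _ B =>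
  induction z using Quotient.inductionOn with | _ C =>
  exact csound hG (hG.pmem (assoc1 A B C)) (hG.pmem (assoc2 A B C))

theorem cneg_neg (x : CQ hG) : cneg hG (cneg hG x) = x := by
  induction x using Quotient.inductionOn with | _ A =>
  exact csound hG (hG.pmem (LProof.dn A)) (hG.pmem (dni A))

theorem cneg_antitone {x y : CQ hG} (h : cle hG x y) : cle hG (cneg hG y) (cneg hG x) := by
  induction x using Quotient.inductionOn with | _ A =>
  induction y using Quotient.inductionOn with | _ B =>
  exact hG.pmem ((contrap1 A B).mp (hG.memP h))

@[simp] theorem cneg_c0 : cneg hG (c0 hG) = c1 hG := rfl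

@[simp] theorem cneg_c1 : cneg hG (c1 hG) = c0 hG :=
  csound hG (hG.pmem (fromTop LFormula.bot)) (hG.pmem (LProof.a7 _))

theorem c13 (x y : CQ hG) : cneg hG (cconj hG x y) = cimp hG x (cneg hG y) := by
  induction x using Quotient.inductionOn with | _ A =>
  induction y using Quotient.inductionOn with | _ B =>
  exact csound hG (hG.pmem (negConj1 A B)) (hG.pmem (negConj2 A B))

theorem cmul_le_left (x y : CQ hG) : cle hG (cconj hG x y) x := by
  induction x using Quotient.inductionOn with | _ A =>
  induction y using Quotient.inductionOn with | _ B =>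
  exact hG.pmem (LProof.a2 A B)

theorem cmul_le_right (x y : CQ hG) : cle hG (cconj hG x y) y := by
  rw [cmul_comm]; exact cmul_le_left hG y x

theorem cmul_mono1 {x y : CQ hG} (z : CQ hG) (h : cle hG x y) :
    cle hG (cconj hG x z) (cconj hG y z) := by
  induction x using Quotient.inductionOn with | _ A =>
  induction y using Quotient.inductionOn with | _ B =>
  induction z using Quotient.inductionOn with | _ C =>
  exact hG.pmem ((mono1 A B C).mp (hG.memP h))

theorem cmul_mono2 {x y : CQ hG} (z : CQ hG) (h : cle hG x y) :
    cle hG (cconj hG z x) (cconj hG z y) := by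
  rw [cmul_comm hG z x, cmul_comm hG z y]; exact cmul_mono1 hG z h

theorem cmul_one (x : CQ hG) : cconj hG x (c1 hG) = x := by
  induction x using Quotient.inductionOn with | _ A =>
  exact csound hG (hG.pmem (LProof.a2 A _)) (hG.pmem (conjTopIntro A))

theorem cone_mul (x : CQ hG) : cconj hG (c1 hG) x = x := by
  rw [cmul_comm]; exact cmul_one hG x

theorem cmul_zero (x : CQ hG) : cconj hG x (c0 hG) = c0 hG :=
  cle_antisymm hG (cmul_le_right hG x (c0 hG)) (czero_le hG _)

theorem cone_imp (x : CQ hG) : cimp hG (c1 hG) x = x := by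
  induction x using Quotient.inductionOn with | _ A =>
  exact csound hG (hG.pmem (fromTop A)) (hG.pmem (wk A _))

theorem cmul_neg_self (x : CQ hG) : cconj hG x (cneg hG x) = c0 hG := by
  refine cle_antisymm hG ?_ (czero_le hG _)
  rw [cmul_comm]
  exact (resid hG).2 (cle_refl hG (cneg hG x))

theorem cmul_eq_zero_iff {x y : CQ hG} :
    cconj hG x y = c0 hG ↔ cle hG x (cneg hG y) := by
  constructor
  · intro h
    have h1 : cneg hG (cconj hG x y) = c1 hG := by rw [h]; exact cneg_c0 hG
    rw [c13] at h1
    exact (cle_iff_imp_eq_one hG).2 h1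
  · intro h
    refine cle_antisymm hG ?_ (czero_le hG _)
    have h2 := cmul_mono1 hG y h
    rwa [cmul_comm hG (cneg hG y) y, cmul_neg_self hG y] at h2

theorem contrapLe {x y : CQ hG} : cle hG (cneg hG x) y ↔ cle hG (cneg hG y) x := by
  constructor
  · intro h
    have := cneg_antitone hG h
    rwa [cneg_neg] at this
  · intro h
    have := cneg_antitone hG h
    rwa [cneg_neg] at this

/-- divisibility in the chain : `y ≤ x → x ⊗ (x→y) = y` -/
theorem cdiv {x y : CQ hG} (h : cle hG y x) : cconj hG x (cimp hG x y) = y := by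
  refine cle_antisymm hG ?_ ?_
  · rw [cmul_comm]
    exact (resid hG).2 (cle_refl hG _)
  · have h1 : cconj hG y (cimp hG y x) = y := by
      rw [(cle_iff_imp_eq_one hG).1 h, cmul_one]
    have h4 : cle hG (cconj hG y (cimp hG y x)) (cconj hG x (cimp hG x y)) := by
      induction x using Quotient.inductionOn with | _ A =>
      induction y using Quotient.inductionOn with | _ B =>
      exact hG.pmem (LProof.a4 B A)
    rwa [h1] at h4

end LK

/- ### Section 3b : addition on the chain and the carry identities -/

namespace LK

variable {Φ : Set LFormula} (hG : Good Φ)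

/-- truncated addition -/
def cadd (x y : CQ hG) : CQ hG := cneg hG (cconj hG (cneg hG x) (cneg hG y))

theorem cadd_comm (x y : CQ hG) : cadd hG x y = cadd hG y x := by
  unfold cadd; rw [cmul_comm]

theorem cneg_add (x y : CQ hG) :
    cneg hG (cadd hG x y) = cconj hG (cneg hG x) (cneg hG y) := by
  unfold cadd; rw [cneg_neg]

theorem cneg_mul (x y : CQ hG) :
    cneg hG (cconj hG x y) = cadd hG (cneg hG x) (cneg hG y) := by
  unfold cadd; rw [cneg_neg, cneg_neg]

theorem caddImpl (x y : CQ hG) : cadd hG x y = cimp hG (cneg hG x) y := by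
  unfold cadd; rw [c13, cneg_neg]

theorem cadd_zero (x : CQ hG) : cadd hG x (c0 hG) = x := by
  unfold cadd; rw [cneg_c0, cmul_one, cneg_neg]

theorem czero_add (x : CQ hG) : cadd hG (c0 hG) x = x := by
  rw [cadd_comm, cadd_zero]

theorem cadd_eq_one_iff {x y : CQ hG} :
    cadd hG x y = c1 hG ↔ cle hG (cneg hG x) y := by
  rw [caddImpl]; exact (cle_iff_imp_eq_one hG).symm

theorem cle_add_left (x y : CQ hG) : cle hG x (cadd hG x y) := by
  have h := cmul_le_left hG (cneg hG x) (cneg hG y)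
  have h2 := cneg_antitone hG h
  rwa [cneg_neg] at h2

theorem cle_add_right (x y : CQ hG) : cle hG y (cadd hG x y) := by
  rw [cadd_comm]; exact cle_add_left hG y x

theorem cadd_assoc (x y z : CQ hG) :
    cadd hG (cadd hG x y) z = cadd hG x (cadd hG y z) := by
  show cneg hG _ = cneg hG _
  rw [cneg_add, cneg_add, cmul_assoc]

theorem c13' (x y : CQ hG) : cneg hG (cconj hG x y) = cimp hG y (cneg hG x) := by
  rw [cmul_comm, c13]

/-- `¬s ≤ w → (s⊗w)⊕¬s = w` -/
theorem E2 {s w : CQ hG} (h : cle hG (cneg hG s) w) :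
    cadd hG (cconj hG s w) (cneg hG s) = w := by
  show cneg hG (cconj hG (cneg hG (cconj hG s w)) (cneg hG (cneg hG s))) = w
  rw [cneg_neg hG s, c13 hG s w, cmul_comm hG (cimp hG s (cneg hG w)) s,
    cdiv hG ((contrapLe hG).1 h), cneg_neg]

/-- `(x⊗y)⊕z = x⊕(y⊗z)` when `¬x ≤ y` and `¬z ≤ y` -/
theorem E1 {x y z : CQ hG} (h1 : cle hG (cneg hG x) y) (h2 : cle hG (cneg hG z) y) :
    cadd hG (cconj hG x y) z = cadd hG x (cconj hG y z) := by
  have d1 : cconj hG y (cimp hG y (cneg hG x)) = cneg hG x := cdiv hG h1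
  have d2 : cconj hG y (cimp hG y (cneg hG z)) = cneg hG z := cdiv hG h2
  have key : cconj hG (cimp hG y (cneg hG x)) (cneg hG z)
      = cconj hG (cneg hG x) (cimp hG y (cneg hG z)) := by
    conv_lhs => rw [← d2]
    rw [← cmul_assoc, cmul_comm hG (cimp hG y (cneg hG x)) y, d1]
  show cneg hG (cconj hG (cneg hG (cconj hG x y)) (cneg hG z))
      = cneg hG (cconj hG (cneg hG x) (cneg hG (cconj hG y z)))
  rw [c13' hG x y, c13 hG y z, key]

/-- `(x⊗y)⊕z = x⊗(y⊕z)` when `¬x ≤ y` and `z ≤ ¬y` -/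
theorem G1 {x y z : CQ hG} (h1 : cle hG (cneg hG x) y) (h2 : cle hG z (cneg hG y)) :
    cadd hG (cconj hG x y) z = cconj hG x (cadd hG y z) := by
  have hyz : cle hG y (cneg hG z) := by
    have := cneg_antitone hG h2; rwa [cneg_neg] at this
  have hb : cconj hG (cneg hG z) (cadd hG y z) = y := by
    have h3 : cimp hG (cneg hG z) y = cadd hG y z := by rw [cadd_comm, caddImpl]
    rw [← h3]; exact cdiv hG hyz
  have htq : cconj hG y (cimp hG y (cneg hG x)) = cneg hG x := cdiv hG h1
  have claim1 : cconj hG (cconj hG (cneg hG z) (cimp hG y (cneg hG x))) (cadd hG y z)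
      = cneg hG x := by
    rw [cmul_comm hG (cneg hG z) (cimp hG y (cneg hG x)), cmul_assoc, hb,
      cmul_comm hG (cimp hG y (cneg hG x)) y, htq]
  have hxs : cle hG (cneg hG x) (cadd hG y z) := cle_trans hG h1 (cle_add_left hG y z)
  have claim2 : cconj hG (cadd hG y z) (cimp hG (cadd hG y z) (cneg hG x)) = cneg hG x :=
    cdiv hG hxs
  have hzero : ∀ w : CQ hG, cconj hG (cneg hG w) w = c0 hG := by
    intro w; rw [cmul_comm, cmul_neg_self]
  have claim3 : cle hG (cneg hG (cadd hG y z))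
      (cconj hG (cneg hG z) (cimp hG y (cneg hG x))) := by
    rw [cneg_add, cmul_comm hG (cneg hG y) (cneg hG z)]
    refine cmul_mono2 hG _ ((resid hG).1 ?_)
    rw [hzero y]
    exact czero_le hG _
  have claim4 : cle hG (cneg hG (cadd hG y z)) (cimp hG (cadd hG y z) (cneg hG x)) := by
    refine (resid hG).1 ?_
    rw [hzero (cadd hG y z)]
    exact czero_le hG _
  have e2a := E2 hG claim3
  have e2b := E2 hG claim4
  have hsx : cconj hG (cadd hG y z) (cconj hG (cneg hG z) (cimp hG y (cneg hG x)))
      = cneg hG x := by rw [cmul_comm]; exact claim1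
  rw [hsx] at e2a
  rw [claim2] at e2b
  have cancel : cconj hG (cneg hG z) (cimp hG y (cneg hG x))
      = cimp hG (cadd hG y z) (cneg hG x) := e2a.symm.trans e2b
  show cneg hG (cconj hG (cneg hG (cconj hG x y)) (cneg hG z)) = cconj hG x (cadd hG y z)
  rw [c13' hG x y, cmul_comm hG (cimp hG y (cneg hG x)) (cneg hG z), cancel,
    ← c13' hG x (cadd hG y z), cneg_neg]

/-- `(x⊕y)⊗z = x⊕(y⊗z)` when `x ≤ ¬y` and `¬y ≤ z` -/
theorem G2 {x y z : CQ hG} (h1 : cle hG x (cneg hG y)) (h2 : cle hG (cneg hG y) z) :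
    cconj hG (cadd hG x y) z = cadd hG x (cconj hG y z) := by
  have c1' : cle hG (cneg hG (cneg hG x)) (cneg hG y) := by rwa [cneg_neg]
  have c2' : cle hG (cneg hG z) (cneg hG (cneg hG y)) := by
    rw [cneg_neg]; exact (contrapLe hG).1 h2
  have g := G1 hG c1' c2'
  have := congrArg (cneg hG) g
  rw [cneg_add, cneg_mul, cneg_neg, cneg_neg, cneg_mul, cneg_neg, cneg_add] at this
  simp only [cneg_neg] at this
  exact this

/-- `(x⊕y)⊗z = x⊗(y⊕z)` when `x ≤ ¬y` and `z ≤ ¬y` -/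
theorem dualE1 {x y z : CQ hG} (h1 : cle hG x (cneg hG y)) (h2 : cle hG z (cneg hG y)) :
    cconj hG (cadd hG x y) z = cconj hG x (cadd hG y z) := by
  have c1' : cle hG (cneg hG (cneg hG x)) (cneg hG y) := by rwa [cneg_neg]
  have c2' : cle hG (cneg hG (cneg hG z)) (cneg hG y) := by rwa [cneg_neg]
  have g := E1 hG c1' c2'
  have := congrArg (cneg hG) g
  rw [cneg_add, cneg_mul, cneg_neg, cneg_neg, cneg_add, cneg_mul] at this
  simp only [cneg_neg] at this
  exact this

/-- carry propagation, both-carry case -/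
theorem TTc1 {x y z : CQ hG} (h1 : cle hG (cneg hG x) y)
    (h2 : cle hG (cneg hG z) (cconj hG x y)) : cle hG (cneg hG x) (cconj hG y z) := by
  have ha : cle hG (cneg hG (cconj hG x y)) z := (contrapLe hG).1 h2
  have hd := cdiv hG h1
  rw [← hd, ← c13' hG x y]
  exact cmul_mono2 hG y ha

theorem TTc2 {x y z : CQ hG} (h3 : cle hG (cneg hG y) z)
    (h2 : cle hG (cneg hG x) (cconj hG y z)) : cle hG (cneg hG z) (cconj hG x y) := by
  have hzy : cle hG (cneg hG z) y := (contrapLe hG).1 h3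
  have hd := cdiv hG hzy
  have hxz : cle hG (cneg hG (cconj hG y z)) x := (contrapLe hG).1 h2
  rw [← hd, ← c13 hG y z, cmul_comm hG x y]
  exact cmul_mono2 hG y hxz

theorem TFnc {x y z : CQ hG} (h2 : ¬ cle hG (cneg hG y) z) :
    ¬ cle hG (cneg hG z) (cconj hG x y) := by
  intro hc
  exact h2 ((contrapLe hG).2 (cle_trans hG hc (cmul_le_right hG x y)))

theorem FTc {x y z : CQ hG} (h3 : cle hG (cneg hG y) z) :
    cle hG (cneg hG (cadd hG x y)) z := by
  rw [cneg_add]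
  exact cle_trans hG (cmul_le_right hG _ _) h3

theorem FTnc2 {x y z : CQ hG} (h1 : ¬ cle hG (cneg hG x) y) :
    ¬ cle hG (cneg hG x) (cconj hG y z) := by
  intro hc
  exact h1 (cle_trans hG hc (cmul_le_left hG y z))

theorem FFe {x y z : CQ hG} :
    cle hG (cneg hG (cadd hG x y)) z ↔ cle hG (cneg hG x) (cadd hG y z) := by
  rw [cneg_add, caddImpl]
  exact resid hG

end LK

/- ### Section 4 : the enveloping ordered group of the chain -/

namespace LK

open scoped Classical

/-- the Chang group of the chain : pairs `k + a` with `a < 1` -/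
@[ext] structure GG {Φ : Set LFormula} (hG : Good Φ) where
  k : ℤ
  a : CQ hG
  pf : a ≠ c1 hG

variable {Φ : Set LFormula} {hG : Good Φ}

theorem mul_ne_one {a b : CQ hG} (ha : a ≠ c1 hG) : cconj hG a b ≠ c1 hG := by
  intro h
  exact ha (cle_antisymm hG (cle_one hG a)
    (cle_trans hG (h ▸ cle_refl hG _) (cmul_le_left hG a b)))

theorem neg_ne_one {a : CQ hG} (ha : a ≠ c0 hG) : cneg hG a ≠ c1 hG := by
  intro h
  apply ha
  have := congrArg (cneg hG) h
  rwa [cneg_neg, cneg_c1] at this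

theorem cle_zero_iff {a : CQ hG} : cle hG a (c0 hG) ↔ a = c0 hG :=
  ⟨fun h => cle_antisymm hG h (czero_le hG a), fun h => h ▸ cle_refl hG _⟩

theorem mk_eq {k k' : ℤ} {a a' : CQ hG} {h : a ≠ c1 hG} {h' : a' ≠ c1 hG}
    (e1 : k = k') (e2 : a = a') : (GG.mk k a h : GG hG) = GG.mk k' a' h' := by
  subst e1; subst e2; rfl

noncomputable def gadd (p q : GG hG) : GG hG :=
  if h : cle hG (cneg hG p.a) q.a then
    ⟨p.k + q.k + 1, cconj hG p.a q.a, mul_ne_one p.pf⟩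
  else
    ⟨p.k + q.k, cadd hG p.a q.a, fun hc => h ((cadd_eq_one_iff hG).1 hc)⟩

noncomputable instance : Add (GG hG) := ⟨gadd⟩

theorem add_def_pos {p q : GG hG} (h : cle hG (cneg hG p.a) q.a) :
    p + q = ⟨p.k + q.k + 1, cconj hG p.a q.a, mul_ne_one p.pf⟩ := by
  show gadd p q = _
  unfold gadd
  exact dif_pos h

theorem add_def_neg {p q : GG hG} (h : ¬ cle hG (cneg hG p.a) q.a) :
    p + q = ⟨p.k + q.k, cadd hG p.a q.a, fun hc => h ((cadd_eq_one_iff hG).1 hc)⟩ := by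
  show gadd p q = _
  unfold gadd
  exact dif_neg h

theorem add_mk_pos {k m : ℤ} {a b : CQ hG} {ha hb} (h : cle hG (cneg hG a) b) :
    (GG.mk k a ha) + (GG.mk m b hb)
      = ⟨k + m + 1, cconj hG a b, mul_ne_one ha⟩ := by
  show gadd _ _ = _
  unfold gadd
  exact dif_pos h

theorem add_mk_neg {k m : ℤ} {a b : CQ hG} {ha hb} (h : ¬ cle hG (cneg hG a) b) :
    (GG.mk k a ha) + (GG.mk m b hb)
      = ⟨k + m, cadd hG a b, fun hc => h ((cadd_eq_one_iff hG).1 hc)⟩ := by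
  show gadd _ _ = _
  unfold gadd
  exact dif_neg h

noncomputable def gneg (p : GG hG) : GG hG :=
  if h : p.a = c0 hG then ⟨-p.k, c0 hG, c0_ne_c1 hG⟩
  else ⟨-p.k - 1, cneg hG p.a, neg_ne_one h⟩

noncomputable instance : Neg (GG hG) := ⟨gneg⟩

theorem neg_def_pos {p : GG hG} (h : p.a = c0 hG) :
    -p = ⟨-p.k, c0 hG, c0_ne_c1 hG⟩ := by
  show gneg p = _
  unfold gneg
  exact dif_pos h

theorem neg_def_neg {p : GG hG} (h : p.a ≠ c0 hG) :
    -p = ⟨-p.k - 1, cneg hG p.a, neg_ne_one h⟩ := by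
  show gneg p = _
  unfold gneg
  exact dif_neg h

instance : Zero (GG hG) := ⟨⟨0, c0 hG, c0_ne_c1 hG⟩⟩

@[simp] theorem zero_k : (0 : GG hG).k = 0 := rfl
@[simp] theorem zero_a : (0 : GG hG).a = c0 hG := rfl

theorem gadd_comm (p q : GG hG) : p + q = q + p := by
  by_cases h : cle hG (cneg hG p.a) q.a
  · have h' : cle hG (cneg hG q.a) p.a := (contrapLe hG).1 h
    rw [add_def_pos h, add_def_pos h']
    exact mk_eq (by omega) (cmul_comm hG _ _)
  · have h' : ¬ cle hG (cneg hG q.a) p.a := fun hc => h ((contrapLe hG).1 hc)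
    rw [add_def_neg h, add_def_neg h']
    exact mk_eq (by omega) (cadd_comm hG _ _)

theorem gadd_assoc (p q r : GG hG) : p + q + r = p + (q + r) := by
  obtain ⟨k, a, hpa⟩ := p
  obtain ⟨m, b, hqb⟩ := q
  obtain ⟨n, c, hrc⟩ := r
  by_cases C1 : cle hG (cneg hG a) b
  · rw [add_mk_pos C1]
    by_cases C3 : cle hG (cneg hG b) c
    · rw [add_mk_pos C3]
      by_cases C2 : cle hG (cneg hG (cconj hG a b)) c
      · have C2' : cle hG (cneg hG a) (cconj hG b c) :=
          TTc1 hG C1 ((contrapLe hG).1 C2)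
        rw [add_mk_pos C2,
          add_mk_pos C2']
        exact mk_eq (by omega) (cmul_assoc hG a b c)
      · have C2' : ¬ cle hG (cneg hG a) (cconj hG b c) := by
          intro hc
          exact C2 ((contrapLe hG).1 (TTc2 hG C3 hc))
        rw [add_mk_neg C2,
          add_mk_neg C2']
        have hcb : cle hG (cneg hG c) b := (contrapLe hG).1 C3
        exact mk_eq (by omega) (E1 hG C1 hcb)
    · rw [add_mk_neg C3]
      have C2 : ¬ cle hG (cneg hG (cconj hG a b)) c := by
        intro hc
        exact (TFnc hG C3) ((contrapLe hG).2 hc)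
      have C2' : cle hG (cneg hG a) (cadd hG b c) :=
        cle_trans hG C1 (cle_add_left hG b c)
      rw [add_mk_neg C2,
        add_mk_pos C2']
      have hc2 : cle hG c (cneg hG b) := (cle_total hG c (cneg hG b)).resolve_right C3
      exact mk_eq (by omega) (G1 hG C1 hc2)
  · rw [add_mk_neg C1]
    have ha2 : cle hG a (cneg hG b) :=
      (cle_total hG a (cneg hG b)).resolve_right (fun hc => C1 ((contrapLe hG).1 hc))
    by_cases C3 : cle hG (cneg hG b) c
    · rw [add_mk_pos C3]
      have C2 : cle hG (cneg hG (cadd hG a b)) c := FTc hG C3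
      have C2' : ¬ cle hG (cneg hG a) (cconj hG b c) := FTnc2 hG C1
      rw [add_mk_pos C2,
        add_mk_neg C2']
      exact mk_eq (by omega) (G2 hG ha2 C3)
    · rw [add_mk_neg C3]
      have hc2 : cle hG c (cneg hG b) := (cle_total hG c (cneg hG b)).resolve_right C3
      by_cases C2 : cle hG (cneg hG (cadd hG a b)) c
      · have C2' : cle hG (cneg hG a) (cadd hG b c) := (FFe hG).1 C2
        rw [add_mk_pos C2,
          add_mk_pos C2']
        exact mk_eq (by omega) (dualE1 hG ha2 hc2)
      · have C2' : ¬ cle hG (cneg hG a) (cadd hG b c) := fun hc => C2 ((FFe hG).2 hc)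
        rw [add_mk_neg C2,
          add_mk_neg C2']
        exact mk_eq (by omega) (cadd_assoc hG a b c)

end LK

/- ### Section 4b : group and order structure on GG -/

namespace LK

variable {Φ : Set LFormula} {hG : Good Φ}

theorem neg_mk_zero {k : ℤ} {h} :
    -(GG.mk k (c0 hG) h) = ⟨-k, c0 hG, c0_ne_c1 hG⟩ := by
  show gneg _ = _
  unfold gneg
  exact dif_pos rfl

theorem neg_mk_pos {k : ℤ} {a : CQ hG} {h} (ha : a ≠ c0 hG) :
    -(GG.mk k a h) = ⟨-k - 1, cneg hG a, neg_ne_one ha⟩ := by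
  show gneg _ = _
  unfold gneg
  exact dif_neg ha

theorem one_not_le {a : CQ hG} (h : a ≠ c1 hG) : ¬ cle hG (c1 hG) a :=
  fun hc => h (cle_antisymm hG (cle_one hG a) hc)

theorem gzero_add (p : GG hG) : 0 + p = p := by
  obtain ⟨k, a, ha⟩ := p
  show GG.mk 0 (c0 hG) (c0_ne_c1 hG) + GG.mk k a ha = GG.mk k a ha
  have hc : ¬ cle hG (cneg hG (c0 hG)) a := by
    rw [cneg_c0]; exact one_not_le ha
  rw [add_mk_neg hc]
  exact mk_eq (by omega) (czero_add hG a)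

theorem gadd_zero (p : GG hG) : p + 0 = p := by
  rw [gadd_comm]; exact gzero_add p

theorem gneg_add_cancel (p : GG hG) : -p + p = 0 := by
  obtain ⟨k, a, ha⟩ := p
  by_cases h : a = c0 hG
  · subst h
    rw [neg_mk_zero]
    have hc : ¬ cle hG (cneg hG (c0 hG)) (c0 hG) := by
      rw [cneg_c0]; exact one_not_le (c0_ne_c1 hG)
    rw [add_mk_neg hc]
    exact mk_eq (by omega) (czero_add hG (c0 hG))
  · rw [neg_mk_pos h]
    have hc : cle hG (cneg hG (cneg hG a)) a := by rw [cneg_neg]; exact cle_refl hG a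
    rw [add_mk_pos hc]
    refine mk_eq (by omega) ?_
    rw [cmul_comm, cmul_neg_self]

noncomputable instance : AddCommGroup (GG hG) :=
  { add := (· + ·), zero := 0, neg := Neg.neg,
    add_assoc := gadd_assoc, zero_add := gzero_add, add_zero := gadd_zero,
    add_comm := gadd_comm, neg_add_cancel := gneg_add_cancel,
    nsmul := nsmulRec, zsmul := zsmulRec }

noncomputable instance : LinearOrder (GG hG) where
  le p q := p.k < q.k ∨ (p.k = q.k ∧ cle hG p.a q.a)
  le_refl p := Or.inr ⟨rfl, cle_refl hG _⟩
  le_trans p q r h1 h2 := by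
    rcases h1 with h1 | ⟨e1, c1⟩
    · rcases h2 with h2 | ⟨e2, c2⟩
      · exact Or.inl (h1.trans h2)
      · exact Or.inl (e2 ▸ h1)
    · rcases h2 with h2 | ⟨e2, c2⟩
      · exact Or.inl (e1 ▸ h2)
      · exact Or.inr ⟨e1.trans e2, cle_trans hG c1 c2⟩
  le_antisymm p q h1 h2 := by
    rcases h1 with h1 | ⟨e1, c1⟩ <;> rcases h2 with h2 | ⟨e2, c2⟩
    · omega
    · omega
    · omega
    · obtain ⟨k, a, ha⟩ := p
      obtain ⟨m, b, hb⟩ := q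
      exact mk_eq e1 (cle_antisymm hG c1 c2)
  le_total p q := by
    rcases lt_trichotomy p.k q.k with h | h | h
    · exact Or.inl (Or.inl h)
    · rcases cle_total hG p.a q.a with hc | hc
      · exact Or.inl (Or.inr ⟨h, hc⟩)
      · exact Or.inr (Or.inr ⟨h.symm, hc⟩)
    · exact Or.inr (Or.inl h)
  toDecidableLE := fun _ _ => Classical.propDecidable _

theorem le_def {p q : GG hG} : p ≤ q ↔ (p.k < q.k ∨ (p.k = q.k ∧ cle hG p.a q.a)) := Iff.rfl

theorem mk_le_mk_left {k m : ℤ} {a b : CQ hG} {ha hb} (h : k < m) :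
    (GG.mk k a ha : GG hG) ≤ GG.mk m b hb := Or.inl h

theorem mk_le_mk_eq {k m : ℤ} {a b : CQ hG} {ha hb} (h : k = m) (hc : cle hG a b) :
    (GG.mk k a ha : GG hG) ≤ GG.mk m b hb := Or.inr ⟨h, hc⟩

theorem gadd_le_add_left : ∀ (p q : GG hG), p ≤ q → ∀ (r : GG hG), r + p ≤ r + q := by
  intro p q hpq r
  obtain ⟨k, a, ha⟩ := p
  obtain ⟨m, b, hb⟩ := q
  obtain ⟨n, c, hc⟩ := r
  rcases hpq with hlt | ⟨heq, hle⟩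
  · simp only at hlt
    by_cases h1 : cle hG (cneg hG c) a <;> by_cases h2 : cle hG (cneg hG c) b
    · rw [add_mk_pos h1, add_mk_pos h2]
      exact mk_le_mk_left (by omega)
    · rw [add_mk_pos h1, add_mk_neg h2]
      rcases eq_or_lt_of_le (Int.add_one_le_iff.mpr hlt) with heq | hlt2
      · exact mk_le_mk_eq (by omega)
          (cle_trans hG (cmul_le_left hG c a) (cle_add_left hG c b))
      · exact mk_le_mk_left (by omega)
    · rw [add_mk_neg h1, add_mk_pos h2]
      exact mk_le_mk_left (by omega)
    · rw [add_mk_neg h1, add_mk_neg h2]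
      exact mk_le_mk_left (by omega)
  · simp only at heq hle
    subst heq
    by_cases h1 : cle hG (cneg hG c) a
    · have h2 : cle hG (cneg hG c) b := cle_trans hG h1 hle
      rw [add_mk_pos h1, add_mk_pos h2]
      exact mk_le_mk_eq rfl (cmul_mono2 hG c hle)
    · by_cases h2 : cle hG (cneg hG c) b
      · rw [add_mk_neg h1, add_mk_pos h2]
        exact mk_le_mk_left (by omega)
      · rw [add_mk_neg h1, add_mk_neg h2]
        refine mk_le_mk_eq rfl ?_
        show cle hG (cadd hG c a) (cadd hG c b)
        rw [cadd_comm hG c a, cadd_comm hG c b]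
        unfold cadd
        exact cneg_antitone hG (cmul_mono1 hG _ (cneg_antitone hG hle))

noncomputable instance : IsOrderedAddMonoid (GG hG) :=
  { add_le_add_left := fun p q h r => by
      rw [add_comm p r, add_comm q r]; exact gadd_le_add_left p q h r
    add_le_add_right := fun p q h r => gadd_le_add_left p q h r }

end LK

/- ### Section 4c : embedding the chain into the group -/

namespace LK

variable {Φ : Set LFormula} {hG : Good Φ}

open scoped Classical in
noncomputable def iota (hG : Good Φ) (a : CQ hG) : GG hG :=
  if h : a = c1 hG then ⟨1, c0 hG, c0_ne_c1 hG⟩ else ⟨0, a, h⟩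

theorem iota_one : iota hG (c1 hG) = ⟨1, c0 hG, c0_ne_c1 hG⟩ := dif_pos rfl

theorem iota_of_ne {a : CQ hG} (h : a ≠ c1 hG) : iota hG a = ⟨0, a, h⟩ := dif_neg h

theorem iota_zero : iota hG (c0 hG) = 0 := by
  rw [iota_of_ne (c0_ne_c1 hG)]; rfl

theorem iota_mono {a b : CQ hG} (h : cle hG a b) : iota hG a ≤ iota hG b := by
  by_cases hb : b = c1 hG
  · subst hb
    rw [iota_one]
    by_cases ha : a = c1 hG
    · subst ha; rw [iota_one]
    · rw [iota_of_ne ha]; exact mk_le_mk_left (by omega)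
  · have ha : a ≠ c1 hG := fun hc => hb (cle_antisymm hG (cle_one hG b) (hc ▸ h))
    rw [iota_of_ne ha, iota_of_ne hb]
    exact mk_le_mk_eq rfl h

theorem iota_inj {a b : CQ hG} (h : iota hG a = iota hG b) : a = b := by
  by_cases ha : a = c1 hG <;> by_cases hb : b = c1 hG
  · rw [ha, hb]
  · subst ha
    rw [iota_one, iota_of_ne hb] at h
    exact absurd (congrArg GG.k h) (by simp)
  · subst hb
    rw [iota_of_ne ha, iota_one] at h
    exact absurd (congrArg GG.k h) (by simp)
  · rw [iota_of_ne ha, iota_of_ne hb] at h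
    exact congrArg GG.a h

theorem iota_strict {a b : CQ hG} (h : cle hG a b) (hne : a ≠ b) :
    iota hG a < iota hG b :=
  lt_of_le_of_ne (iota_mono h) (fun hc => hne (iota_inj hc))

theorem iota_nonneg (a : CQ hG) : 0 ≤ iota hG a := by
  rw [← iota_zero]; exact iota_mono (czero_le hG a)

theorem iota_le_one (a : CQ hG) : iota hG a ≤ iota hG (c1 hG) :=
  iota_mono (cle_one hG a)

theorem zero_lt_iota_one : (0 : GG hG) < iota hG (c1 hG) := by
  rw [← iota_zero]
  exact iota_strict (czero_le hG _) (c0_ne_c1 hG)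

/-- the implication decomposition -/
theorem L1G {a b : CQ hG} (hba : cle hG b a) (hnab : ¬ cle hG a b) :
    iota hG (cimp hG a b) + iota hG a = iota hG (c1 hG) + iota hG b := by
  by_cases ha : a = c1 hG
  · subst ha
    rw [cone_imp hG b]
    exact add_comm _ _
  · have hb : b ≠ c1 hG := fun hc => ha (cle_antisymm hG (cle_one hG a) (hc ▸ hba))
    have himp : cimp hG a b ≠ c1 hG := fun hc => hnab ((cle_iff_imp_eq_one hG).2 hc)
    rw [iota_of_ne ha, iota_of_ne hb, iota_of_ne himp, iota_one]
    have hc1 : cle hG (cneg hG (cimp hG a b)) a := by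
      refine (contrapLe hG).1 ((resid hG).1 ?_)
      have : cconj hG (cneg hG a) a = c0 hG := by rw [cmul_comm, cmul_neg_self]
      rw [this]
      exact czero_le hG b
    rw [add_mk_pos hc1]
    have hc2 : ¬ cle hG (cneg hG (c0 hG)) b := by
      rw [cneg_c0]; exact one_not_le hb
    rw [add_mk_neg hc2]
    refine mk_eq (by omega) ?_
    rw [cmul_comm, cdiv hG hba, czero_add]

/-- conjunction bound, zero case -/
theorem L2G {a b : CQ hG} (h : cle hG a (cneg hG b)) :
    iota hG a + iota hG b ≤ iota hG (c1 hG) := by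
  by_cases ha : a = c1 hG
  · subst ha
    have hb0 : b = c0 hG := by
      have h1 : cneg hG b = c1 hG := cle_antisymm hG (cle_one hG _) h
      have := congrArg (cneg hG) h1
      rwa [cneg_neg, cneg_c1] at this
    subst hb0
    rw [iota_zero, add_zero]
  · by_cases hb : b = c1 hG
    · subst hb
      have ha0 : a = c0 hG := by
        rw [cneg_c1] at h
        exact cle_antisymm hG h (czero_le hG a)
      subst ha0
      rw [iota_zero, zero_add]
    · rw [iota_of_ne ha, iota_of_ne hb]
      by_cases hcar : cle hG (cneg hG a) b
      · rw [add_mk_pos hcar, iota_one]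
        exact mk_le_mk_eq rfl (by
          rw [(cmul_eq_zero_iff hG).2 h]
          exact cle_refl hG _)
      · rw [add_mk_neg hcar, iota_one]
        exact mk_le_mk_left (by omega)

/-- conjunction bound, positive case -/
theorem L3Gpre {a b : CQ hG} (h : ¬ cle hG a (cneg hG b)) :
    iota hG (c1 hG) ≤ iota hG a + iota hG b := by
  by_cases ha : a = c1 hG
  · subst ha
    calc iota hG (c1 hG) = iota hG (c1 hG) + 0 := (add_zero _).symm
    _ ≤ iota hG (c1 hG) + iota hG b := add_le_add_right (iota_nonneg b) _
  · by_cases hb : b = c1 hG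
    · subst hb
      calc iota hG (c1 hG) = 0 + iota hG (c1 hG) := (zero_add _).symm
      _ ≤ iota hG a + iota hG (c1 hG) := add_le_add_left (iota_nonneg a) _
    · have hcar : cle hG (cneg hG a) b := by
        have h1 : cle hG (cneg hG b) a :=
          (cle_total hG (cneg hG b) a).resolve_right (fun hc => h hc)
        exact (contrapLe hG).1 h1
      rw [iota_of_ne ha, iota_of_ne hb, add_mk_pos hcar, iota_one]
      exact mk_le_mk_eq rfl (czero_le hG _)

/-- conjunction decomposition, positive case -/
theorem L3G {a b : CQ hG} (h : ¬ cle hG a (cneg hG b)) :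
    iota hG (cconj hG a b) + iota hG (c1 hG) = iota hG a + iota hG b := by
  by_cases ha : a = c1 hG
  · subst ha
    rw [cone_mul hG b]
    exact add_comm _ _
  · by_cases hb : b = c1 hG
    · subst hb
      rw [cmul_one hG a]
    · have hcar : cle hG (cneg hG a) b := by
        have h1 : cle hG (cneg hG b) a :=
          (cle_total hG (cneg hG b) a).resolve_right (fun hc => h hc)
        exact (contrapLe hG).1 h1
      have hab1 : cconj hG a b ≠ c1 hG := mul_ne_one ha
      rw [iota_of_ne ha, iota_of_ne hb, add_mk_pos hcar,
        iota_of_ne hab1, iota_one]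
      have hc2 : ¬ cle hG (cneg hG (cconj hG a b)) (c0 hG) := by
        intro hc
        apply hab1
        have h0 : cneg hG (cconj hG a b) = c0 hG := cle_zero_iff.1 hc
        have := congrArg (cneg hG) h0
        rwa [cneg_neg, cneg_c0] at this
      rw [add_mk_neg hc2]
      exact mk_eq (by omega) (cadd_zero hG _)

end LK

/- ### Section 5 : Gordan's theorem via Fourier-Motzkin -/

namespace LK

variable {F : Type*} [Field F] [LinearOrder F] [IsStrictOrderedRing F]

noncomputable def dot {n : ℕ} (v x : Fin n → F) : F := ∑ i, v i * x i

theorem exists_between_finsets {X : Type*} (SP SN : Finset X) (lb ub : X → F)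
    (h : ∀ u ∈ SP, ∀ w ∈ SN, lb u < ub w) :
    ∃ t : F, (∀ u ∈ SP, lb u < t) ∧ (∀ w ∈ SN, t < ub w) := by
  rcases SP.eq_empty_or_nonempty with rfl | hp
  · rcases SN.eq_empty_or_nonempty with rfl | hn
    · exact ⟨0, by simp, by simp⟩
    · refine ⟨(SN.image ub).min' (hn.image ub) - 1, by simp, fun w hw => ?_⟩
      have h1 : (SN.image ub).min' (hn.image ub) ≤ ub w :=
        Finset.min'_le _ _ (Finset.mem_image_of_mem ub hw)
      linarith
  · rcases SN.eq_empty_or_nonempty with rfl | hn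
    · refine ⟨(SP.image lb).max' (hp.image lb) + 1, fun u hu => ?_, by simp⟩
      have h1 : lb u ≤ (SP.image lb).max' (hp.image lb) :=
        Finset.le_max' _ _ (Finset.mem_image_of_mem lb hu)
      linarith
    · have hmm : (SP.image lb).max' (hp.image lb) < (SN.image ub).min' (hn.image ub) := by
        obtain ⟨u, hu, hul⟩ := Finset.mem_image.1 ((SP.image lb).max'_mem (hp.image lb))
        obtain ⟨w, hw, hwl⟩ := Finset.mem_image.1 ((SN.image ub).min'_mem (hn.image ub))
        rw [← hul, ← hwl]
        exact h u hu w hw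
      obtain ⟨t, ht1, ht2⟩ := exists_between hmm
      refine ⟨t, fun u hu => lt_of_le_of_lt ?_ ht1, fun w hw => lt_of_lt_of_le ht2 ?_⟩
      · exact Finset.le_max' _ _ (Finset.mem_image_of_mem lb hu)
      · exact Finset.min'_le _ _ (Finset.mem_image_of_mem ub hw)

theorem dot_snoc {n : ℕ} (v : Fin (n+1) → F) (y : Fin n → F) (t : F) :
    dot v (Fin.snoc y t) = dot (v ∘ Fin.castSucc) y + v (Fin.last n) * t := by
  unfold dot
  rw [Fin.sum_univ_castSucc]
  simp

theorem dot_smul_sub {n : ℕ} (a b : F) (v w : Fin n → F) (y : Fin n → F) :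
    dot (a • v - b • w) y = a * dot v y - b * dot w y := by
  unfold dot
  rw [Finset.mul_sum, Finset.mul_sum, ← Finset.sum_sub_distrib]
  refine Finset.sum_congr rfl fun i _ => ?_
  simp only [Pi.sub_apply, Pi.smul_apply, smul_eq_mul]
  ring

theorem dot_add_left {n : ℕ} (v w x : Fin n → F) : dot (v + w) x = dot v x + dot w x := by
  unfold dot
  rw [← Finset.sum_add_distrib]
  refine Finset.sum_congr rfl fun i _ => ?_
  simp [add_mul]

theorem dot_sub_left {n : ℕ} (v w x : Fin n → F) : dot (v - w) x = dot v x - dot w x := by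
  unfold dot
  rw [← Finset.sum_sub_distrib]
  refine Finset.sum_congr rfl fun i _ => ?_
  simp [sub_mul]

theorem dot_zero_left {n : ℕ} (x : Fin n → F) : dot (0 : Fin n → F) x = 0 := by
  simp [dot]

theorem sum_ite_smul {n : ℕ} [DecidableEq (Fin n → F)] (S : Finset (Fin n → F))
    (z : Fin n → F) (hz : z ∈ S) (a : F) :
    ∑ v ∈ S, (if v = z then a else 0) • v = a • z := by
  have h1 : ∀ v ∈ S, (if v = z then a else 0) • v = if v = z then a • z else 0 := by
    intro v _
    split
    · next h => rw [h]
    · simp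
  rw [Finset.sum_congr rfl h1, Finset.sum_ite_eq' S z (fun _ => a • z)]
  simp [hz]

/-- pull back a dependence along row decompositions -/
theorem gordan_pullback {n : ℕ} (S : Finset (Fin (n+1) → F)) (T : Finset (Fin n → F))
    (c' : (Fin n → F) → F) (hc'0 : ∀ t, 0 ≤ c' t) (hex : ∃ t ∈ T, 0 < c' t)
    (hsum : ∑ t ∈ T, c' t • t = 0)
    (R : (Fin n → F) → (Fin (n+1) → F) → F)
    (hR0 : ∀ t ∈ T, ∀ v, 0 ≤ R t v)
    (hRsupp : ∀ t ∈ T, ∀ v, v ∉ S → R t v = 0)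
    (hRpos : ∀ t ∈ T, 0 < c' t → ∃ v ∈ S, 0 < R t v)
    (hRsum : ∀ t ∈ T, ∑ v ∈ S, R t v • v = (Fin.snoc t 0 : Fin (n+1) → F)) :
    ∃ c : (Fin (n+1) → F) → F, (∀ v, 0 ≤ c v) ∧ (∃ v ∈ S, 0 < c v) ∧
      (∀ v, v ∉ S → c v = 0) ∧ ∑ v ∈ S, c v • v = 0 := by
  obtain ⟨t0, ht0, ht0p⟩ := hex
  obtain ⟨v0, hv0S, hv0p⟩ := hRpos t0 ht0 ht0p
  refine ⟨fun v => ∑ t ∈ T, c' t * R t v, ?_, ⟨v0, hv0S, ?_⟩, ?_, ?_⟩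
  · intro v; exact Finset.sum_nonneg fun t ht => mul_nonneg (hc'0 t) (hR0 t ht v)
  · have hle : c' t0 * R t0 v0 ≤ ∑ t ∈ T, c' t * R t v0 :=
      Finset.single_le_sum (fun t ht => mul_nonneg (hc'0 t) (hR0 t ht v0)) ht0
    exact lt_of_lt_of_le (mul_pos ht0p hv0p) hle
  · intro v hv
    exact Finset.sum_eq_zero fun t ht => by rw [hRsupp t ht v hv, mul_zero]
  · have e1 : ∑ v ∈ S, (∑ t ∈ T, c' t * R t v) • v
        = ∑ t ∈ T, c' t • (Fin.snoc t 0 : Fin (n+1) → F) := by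
      calc ∑ v ∈ S, (∑ t ∈ T, c' t * R t v) • v
          = ∑ v ∈ S, ∑ t ∈ T, (c' t * R t v) • v := by
            refine Finset.sum_congr rfl fun v _ => ?_
            rw [Finset.sum_smul]
        _ = ∑ t ∈ T, ∑ v ∈ S, (c' t * R t v) • v := Finset.sum_comm
        _ = ∑ t ∈ T, c' t • (Fin.snoc t 0 : Fin (n+1) → F) := by
            refine Finset.sum_congr rfl fun t ht => ?_
            rw [← hRsum t ht, Finset.smul_sum]
            refine Finset.sum_congr rfl fun v _ => ?_
            rw [smul_smul]
    rw [e1]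
    funext i
    rw [Finset.sum_apply]
    refine Fin.lastCases ?_ ?_ i
    · refine Finset.sum_eq_zero fun t ht => ?_
      simp [Fin.snoc_last]
    · intro j
      have h2 := congrFun hsum j
      rw [Finset.sum_apply] at h2
      simp only [Pi.smul_apply, smul_eq_mul, Fin.snoc_castSucc, Pi.zero_apply] at h2 ⊢
      exact h2

/-- Gordan's theorem : either a strictly positive functional exists, or there is a
nonnegative nontrivial dependence. -/
theorem gordan : ∀ (n : ℕ) (S : Finset (Fin n → F)),
    (∃ x : Fin n → F, ∀ v ∈ S, 0 < dot v x) ∨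
    (∃ c : (Fin n → F) → F, (∀ v, 0 ≤ c v) ∧ (∃ v ∈ S, 0 < c v) ∧
      (∀ v, v ∉ S → c v = 0) ∧ ∑ v ∈ S, c v • v = 0) := by
  intro n
  induction n with
  | zero =>
      intro S
      rcases S.eq_empty_or_nonempty with rfl | ⟨v0, hv0⟩
      · exact Or.inl ⟨0, by simp⟩
      · classical
        refine Or.inr ⟨fun v => if v ∈ S then 1 else 0, ?_, ⟨v0, hv0, by simp [hv0]⟩, ?_, ?_⟩
        · intro v; dsimp only; split <;> norm_num
        · intro v hv; simp [hv]
        · have hz : ∀ v : Fin 0 → F, v = 0 := fun v => funext fun i => i.elim0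
          rw [hz (∑ v ∈ S, (if v ∈ S then (1:F) else 0) • v)]
  | succ n ih =>
      intro S
      classical
      set lst : (Fin (n+1) → F) → F := fun v => v (Fin.last n) with hlst
      set ini : (Fin (n+1) → F) → (Fin n → F) := fun v => v ∘ Fin.castSucc with hini
      set S0 : Finset (Fin n → F) := (S.filter (fun v => lst v = 0)).image ini with hS0
      set SP := S.filter (fun v => 0 < lst v) with hSP
      set SN := S.filter (fun v => lst v < 0) with hSN
      set comb : (Fin (n+1) → F) × (Fin (n+1) → F) → (Fin n → F) :=
        fun p => lst p.1 • ini p.2 - lst p.2 • ini p.1 with hcomb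
      set SC := (SP ×ˢ SN).image comb with hSC
      rcases ih (S0 ∪ SC) with ⟨y, hy⟩ | ⟨c', hc'0, hex, hc'supp, hc'sum⟩
      · -- feasible case
        left
        have hz : ∀ v ∈ S, lst v = 0 → 0 < dot (ini v) y := by
          intro v hv h0
          exact hy _ (Finset.mem_union_left _
            (Finset.mem_image_of_mem ini (Finset.mem_filter.2 ⟨hv, h0⟩)))
        have hp : ∀ u ∈ SP, ∀ w ∈ SN,
            0 < lst u * dot (ini w) y - lst w * dot (ini u) y := by
          intro u hu w hw
          have h1 := hy _ (Finset.mem_union_right _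
            (Finset.mem_image_of_mem comb (Finset.mk_mem_product hu hw)))
          rw [hcomb] at h1
          rwa [← dot_smul_sub (lst u) (lst w) (ini w) (ini u) y]
        have hbound : ∀ u ∈ SP, ∀ w ∈ SN,
            (fun u => -(dot (ini u) y) / lst u) u < (fun w => -(dot (ini w) y) / lst w) w := by
          intro u hu w hw
          have hpu : 0 < lst u := (Finset.mem_filter.1 hu).2
          have hnw : lst w < 0 := (Finset.mem_filter.1 hw).2
          have hpu' : lst u ≠ 0 := ne_of_gt hpu
          have hnw' : lst w ≠ 0 := ne_of_lt hnw
          have hkey := hp u hu w hw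
          dsimp only
          have hpos : 0 < lst u * (-(lst w)) := mul_pos hpu (neg_pos.2 hnw)
          rw [← mul_lt_mul_iff_of_pos_right hpos]
          have e1 : -(dot (ini u) y) / lst u * (lst u * -(lst w))
              = dot (ini u) y * lst w := by
            field_simp
          have e2 : -(dot (ini w) y) / lst w * (lst u * -(lst w))
              = dot (ini w) y * lst u := by
            field_simp
          rw [e1, e2]
          nlinarith [hkey]
        obtain ⟨t, htP, htN⟩ := exists_between_finsets SP SN
          (fun u => -(dot (ini u) y) / lst u) (fun w => -(dot (ini w) y) / lst w) hbound
        refine ⟨Fin.snoc y t, fun v hv => ?_⟩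
        rw [dot_snoc]
        have hiv : v ∘ Fin.castSucc = ini v := rfl
        have hlv : v (Fin.last n) = lst v := rfl
        rw [hiv, hlv]
        rcases lt_trichotomy (lst v) 0 with hneg | h0 | hpos
        · have hvN : v ∈ SN := Finset.mem_filter.2 ⟨hv, hneg⟩
          have h2 := htN v hvN
          have h3 := mul_lt_mul_of_neg_right h2 hneg
          rw [div_mul_cancel₀ _ (ne_of_lt hneg)] at h3
          nlinarith [h3]
        · rw [h0]
          simp only [zero_mul, add_zero]
          exact hz v hv h0
        · have hvP : v ∈ SP := Finset.mem_filter.2 ⟨hv, hpos⟩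
          have h2 := htP v hvP
          have h3 := mul_lt_mul_of_pos_right h2 hpos
          rw [div_mul_cancel₀ _ (ne_of_gt hpos)] at h3
          nlinarith [h3]
      · -- dependence case
        right
        have hS0mem : ∀ t ∈ S0, ∃ z, z ∈ S ∧ lst z = 0 ∧ ini z = t := by
          intro t ht
          obtain ⟨z, hzf, hze⟩ := Finset.mem_image.1 ht
          obtain ⟨hzS, hz0⟩ := Finset.mem_filter.1 hzf
          exact ⟨z, hzS, hz0, hze⟩
        have hSCmem : ∀ t ∈ SC, ∃ p : (Fin (n+1) → F) × (Fin (n+1) → F),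
            (p.1 ∈ S ∧ 0 < lst p.1) ∧ (p.2 ∈ S ∧ lst p.2 < 0) ∧ comb p = t := by
          intro t ht
          obtain ⟨p, hpf, hpe⟩ := Finset.mem_image.1 ht
          obtain ⟨h1, h2⟩ := Finset.mem_product.1 hpf
          exact ⟨p, ⟨(Finset.mem_filter.1 h1).1, (Finset.mem_filter.1 h1).2⟩,
            ⟨(Finset.mem_filter.1 h2).1, (Finset.mem_filter.1 h2).2⟩, hpe⟩
        refine gordan_pullback S (S0 ∪ SC) c' hc'0 hex hc'sum
          (fun t v =>
            if h : t ∈ S0 then (if v = Classical.choose (hS0mem t h) then 1 else 0)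
            else if h2 : t ∈ SC then
              ((if v = (Classical.choose (hSCmem t h2)).2
                  then lst (Classical.choose (hSCmem t h2)).1 else 0) +
               (if v = (Classical.choose (hSCmem t h2)).1
                  then -(lst (Classical.choose (hSCmem t h2)).2) else 0))
            else 0) ?_ ?_ ?_ ?_
        · -- nonnegativity
          intro t ht v
          by_cases h : t ∈ S0
          · rw [dif_pos h]
            split <;> norm_num
          · rw [dif_neg h]
            have h2 : t ∈ SC := (Finset.mem_union.1 ht).resolve_left h
            rw [dif_pos h2]
            obtain ⟨⟨_, hu⟩, ⟨_, hw⟩, _⟩ := Classical.choose_spec (hSCmem t h2)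
            have g1 : (0:F) ≤ if v = (Classical.choose (hSCmem t h2)).2
                then lst (Classical.choose (hSCmem t h2)).1 else 0 := by
              split
              · exact le_of_lt hu
              · exact le_refl 0
            have g2 : (0:F) ≤ if v = (Classical.choose (hSCmem t h2)).1
                then -(lst (Classical.choose (hSCmem t h2)).2) else 0 := by
              split
              · exact le_of_lt (neg_pos.2 hw)
              · exact le_refl 0
            linarith
        · -- support
          intro t ht v hv
          by_cases h : t ∈ S0
          · rw [dif_pos h]
            obtain ⟨hzS, _, _⟩ := Classical.choose_spec (hS0mem t h)
            rw [if_neg (fun hc => hv (by rw [hc]; exact hzS))]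
          · rw [dif_neg h]
            have h2 : t ∈ SC := (Finset.mem_union.1 ht).resolve_left h
            rw [dif_pos h2]
            obtain ⟨⟨huS, _⟩, ⟨hwS, _⟩, _⟩ := Classical.choose_spec (hSCmem t h2)
            rw [if_neg (fun hc => hv (by rw [hc]; exact hwS)),
              if_neg (fun hc => hv (by rw [hc]; exact huS))]
            norm_num
        · -- positivity
          intro t ht _
          by_cases h : t ∈ S0
          · obtain ⟨hzS, _, _⟩ := Classical.choose_spec (hS0mem t h)
            refine ⟨Classical.choose (hS0mem t h), hzS, ?_⟩
            rw [dif_pos h, if_pos rfl]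
            norm_num
          · have h2 : t ∈ SC := (Finset.mem_union.1 ht).resolve_left h
            obtain ⟨⟨huS, hu⟩, ⟨hwS, hw⟩, _⟩ := Classical.choose_spec (hSCmem t h2)
            refine ⟨(Classical.choose (hSCmem t h2)).1, huS, ?_⟩
            rw [dif_neg h, dif_pos h2]
            have hne : (Classical.choose (hSCmem t h2)).1
                ≠ (Classical.choose (hSCmem t h2)).2 := by
              intro hc
              rw [hc] at hu
              exact absurd hu (not_lt.2 (le_of_lt hw))
            rw [if_neg hne, if_pos rfl]
            linarith [neg_pos.2 hw]
        · -- row sums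
          intro t ht
          by_cases h : t ∈ S0
          · simp only [dif_pos h]
            obtain ⟨hzS, hz0, hzi⟩ := Classical.choose_spec (hS0mem t h)
            rw [sum_ite_smul S _ hzS]
            rw [one_smul]
            funext i
            refine Fin.lastCases ?_ ?_ i
            · rw [Fin.snoc_last]
              exact hz0
            · intro j
              rw [Fin.snoc_castSucc]
              exact congrFun hzi j
          · have h2 : t ∈ SC := (Finset.mem_union.1 ht).resolve_left h
            simp only [dif_neg h, dif_pos h2]
            obtain ⟨⟨huS, hu⟩, ⟨hwS, hw⟩, hce⟩ := Classical.choose_spec (hSCmem t h2)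
            have hsplit : ∀ v ∈ S,
                (((if v = (Classical.choose (hSCmem t h2)).2
                    then lst (Classical.choose (hSCmem t h2)).1 else 0) +
                  (if v = (Classical.choose (hSCmem t h2)).1
                    then -(lst (Classical.choose (hSCmem t h2)).2) else 0)) • v)
                = ((if v = (Classical.choose (hSCmem t h2)).2
                    then lst (Classical.choose (hSCmem t h2)).1 else 0) • v)
                  + ((if v = (Classical.choose (hSCmem t h2)).1
                    then -(lst (Classical.choose (hSCmem t h2)).2) else 0) • v) := by
              intro v _
              rw [add_smul]
            rw [Finset.sum_congr rfl hsplit, Finset.sum_add_distrib,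
              sum_ite_smul S _ hwS, sum_ite_smul S _ huS]
            funext i
            refine Fin.lastCases ?_ ?_ i
            · simp only [Pi.add_apply, Pi.smul_apply, smul_eq_mul, Fin.snoc_last]
              ring
            · intro j
              simp only [Pi.add_apply, Pi.smul_apply, smul_eq_mul, Fin.snoc_castSucc]
              have hcj := congrFun hce j
              have e : comb (Classical.choose (hSCmem t h2)) j
                  = lst (Classical.choose (hSCmem t h2)).1
                      * (Classical.choose (hSCmem t h2)).2 (Fin.castSucc j)
                    - lst (Classical.choose (hSCmem t h2)).2
                      * (Classical.choose (hSCmem t h2)).1 (Fin.castSucc j) := rfl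
              rw [← hcj, e]
              ring

end LK

/- ### Section 6 : assembling the valuation -/

namespace LK

open scoped Classical

/-- the list of subformulas -/
def subf : LFormula → List LFormula
  | .var n => [.var n]
  | .bot => [.bot]
  | .conj α β => .conj α β :: (subf α ++ subf β)
  | .impl α β => .impl α β :: (subf α ++ subf β)

theorem self_mem_subf (ψ : LFormula) : ψ ∈ subf ψ := by
  cases ψ <;> simp [subf]

theorem subf_trans : ∀ φ ψ, ψ ∈ subf φ → subf ψ ⊆ subf φ := by
  intro φ
  induction φ with
  | var n =>
      intro ψ h
      simp [subf] at h
      subst h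
      exact fun x hx => hx
  | bot =>
      intro ψ h
      simp [subf] at h
      subst h
      exact fun x hx => hx
  | conj α β ihα ihβ =>
      intro ψ h
      rcases List.mem_cons.1 h with rfl | h
      · exact fun x hx => hx
      · rcases List.mem_append.1 h with h | h
        · exact fun x hx => List.mem_cons_of_mem _ (List.mem_append_left _ (ihα ψ h hx))
        · exact fun x hx => List.mem_cons_of_mem _ (List.mem_append_right _ (ihβ ψ h hx))
  | impl α β ihα ihβ =>
      intro ψ h
      rcases List.mem_cons.1 h with rfl | h
      · exact fun x hx => hx
      · rcases List.mem_append.1 h with h | h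
        · exact fun x hx => List.mem_cons_of_mem _ (List.mem_append_left _ (ihα ψ h hx))
        · exact fun x hx => List.mem_cons_of_mem _ (List.mem_append_right _ (ihβ ψ h hx))

theorem mem_subf_conj_left {φ α β : LFormula} (h : (LFormula.conj α β) ∈ subf φ) :
    α ∈ subf φ :=
  subf_trans φ _ h (by
    show α ∈ subf (LFormula.conj α β)
    exact List.mem_cons_of_mem _ (List.mem_append_left _ (self_mem_subf α)))

theorem mem_subf_conj_right {φ α β : LFormula} (h : (LFormula.conj α β) ∈ subf φ) :
    β ∈ subf φ :=
  subf_trans φ _ h (by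
    show β ∈ subf (LFormula.conj α β)
    exact List.mem_cons_of_mem _ (List.mem_append_right _ (self_mem_subf β)))

theorem mem_subf_impl_left {φ α β : LFormula} (h : (LFormula.impl α β) ∈ subf φ) :
    α ∈ subf φ :=
  subf_trans φ _ h (by
    show α ∈ subf (LFormula.impl α β)
    exact List.mem_cons_of_mem _ (List.mem_append_left _ (self_mem_subf α)))

theorem mem_subf_impl_right {φ α β : LFormula} (h : (LFormula.impl α β) ∈ subf φ) :
    β ∈ subf φ :=
  subf_trans φ _ h (by
    show β ∈ subf (LFormula.impl α β)
    exact List.mem_cons_of_mem _ (List.mem_append_right _ (self_mem_subf β)))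

variable {Φ : Set LFormula} (hG : Good Φ) (φ0 : LFormula)

/-- torsion-freeness of the ordered group -/
instance : NoZeroSMulDivisors ℤ (GG hG) := by
  refine ⟨fun {n x} h => ?_⟩
  by_cases hn : n = 0
  · exact Or.inl hn
  · refine Or.inr (zsmul_right_injective hn ?_)
    simpa using h

noncomputable def val (ψ : LFormula) : GG hG := iota hG (mkC hG ψ)

noncomputable def genset : Finset (GG hG) :=
  ((subf φ0).map (val hG)).toFinset ∪ {iota hG (c1 hG)}

noncomputable def Hgrp : AddSubgroup (GG hG) := AddSubgroup.closure ↑(genset hG φ0)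

instance : NoZeroSMulDivisors ℤ (Hgrp hG φ0) := by
  refine ⟨fun {n x} h => ?_⟩
  have hc : n • (x : GG hG) = 0 := by
    have := congrArg (fun y : Hgrp hG φ0 => (y : GG hG)) h
    simpa using this
  rcases eq_zero_or_eq_zero_of_smul_eq_zero hc with h1 | h1
  · exact Or.inl h1
  · exact Or.inr (Subtype.ext (by simpa using h1))

instance : Module.Finite ℤ (Hgrp hG φ0) := by
  refine Module.Finite.iff_addGroup_fg.mpr ?_
  exact (AddGroup.fg_iff_addSubgroup_fg _).mpr ⟨genset hG φ0, rfl⟩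

noncomputable def bas := Module.Free.chooseBasis ℤ (Hgrp hG φ0)

noncomputable def dimn : ℕ := Fintype.card (Module.Free.ChooseBasisIndex ℤ (Hgrp hG φ0))

noncomputable def beq : Module.Free.ChooseBasisIndex ℤ (Hgrp hG φ0) ≃ Fin (dimn hG φ0) :=
  Fintype.equivFinOfCardEq rfl

noncomputable def vec (h : Hgrp hG φ0) : Fin (dimn hG φ0) → ℚ :=
  fun i => (((bas hG φ0).repr h) ((beq hG φ0).symm i) : ℚ)

theorem vec_sub (a b : Hgrp hG φ0) : vec hG φ0 (a - b) = vec hG φ0 a - vec hG φ0 b := by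
  funext i
  simp [vec, map_sub]

theorem vec_add (a b : Hgrp hG φ0) : vec hG φ0 (a + b) = vec hG φ0 a + vec hG φ0 b := by
  funext i
  simp [vec, map_add]

theorem vec_inj {a b : Hgrp hG φ0} (h : vec hG φ0 a = vec hG φ0 b) : a = b := by
  apply (bas hG φ0).repr.injective
  ext j
  have := congrFun h ((beq hG φ0) j)
  simp only [vec, Equiv.symm_apply_apply] at this
  exact_mod_cast this

noncomputable def valH (ψ : LFormula) : Hgrp hG φ0 :=
  if h : ψ ∈ subf φ0 then
    ⟨val hG ψ, AddSubgroup.subset_closure (by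
      simp only [genset, Finset.coe_union, Set.mem_union]
      exact Or.inl (by
        simp only [Finset.coe_sort_coe, List.coe_toFinset, List.mem_map, Set.mem_setOf_eq]
        exact List.mem_map.1 (List.mem_map_of_mem (f := val hG) h)))⟩
  else 0

noncomputable def uH : Hgrp hG φ0 :=
  ⟨iota hG (c1 hG), AddSubgroup.subset_closure (by
    simp [genset])⟩

theorem valH_coe {ψ : LFormula} (h : ψ ∈ subf φ0) :
    ((valH hG φ0 ψ : Hgrp hG φ0) : GG hG) = val hG ψ := by
  rw [valH, dif_pos h]

theorem uH_coe : ((uH hG φ0 : Hgrp hG φ0) : GG hG) = iota hG (c1 hG) := rfl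

noncomputable def EH : Finset (Hgrp hG φ0) :=
  ((subf φ0).map (valH hG φ0)).toFinset ∪ {0, uH hG φ0}

noncomputable def ES : Finset (Hgrp hG φ0) :=
  EH hG φ0 ∪ Finset.image₂ (· + ·) (EH hG φ0) (EH hG φ0)

noncomputable def DD : Finset (Fin (dimn hG φ0) → ℚ) :=
  (((ES hG φ0) ×ˢ (ES hG φ0)).filter
    (fun p => ((p.1 : GG hG)) < ((p.2 : GG hG)))).image
    (fun p => vec hG φ0 (p.2 - p.1))

theorem no_dep :
    ¬ ∃ c : (Fin (dimn hG φ0) → ℚ) → ℚ, (∀ v, 0 ≤ c v) ∧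
      (∃ v ∈ DD hG φ0, 0 < c v) ∧ (∀ v, v ∉ DD hG φ0 → c v = 0) ∧
      ∑ v ∈ DD hG φ0, c v • v = 0 := by
  rintro ⟨c, hc0, ⟨v0, hv0D, hv0pos⟩, hcsupp, hcsum⟩
  -- choose positive group elements representing each vector
  have hch : ∀ v, ∃ g : Hgrp hG φ0, v ∈ DD hG φ0 →
      (vec hG φ0 g = v ∧ 0 < ((g : Hgrp hG φ0) : GG hG)) := by
    intro v
    by_cases hv : v ∈ DD hG φ0
    · obtain ⟨p, hpf, hpe⟩ := Finset.mem_image.1 hv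
      have hlt := (Finset.mem_filter.1 hpf).2
      refine ⟨p.2 - p.1, fun _ => ⟨hpe, ?_⟩⟩
      have : ((p.2 - p.1 : Hgrp hG φ0) : GG hG) = (p.2 : GG hG) - (p.1 : GG hG) := by
        simp
      rw [this]
      exact sub_pos.2 hlt
    · exact ⟨0, fun h => absurd h hv⟩
  choose δ hδ using hch
  set N : ℕ := ∏ v ∈ DD hG φ0, (c v).den with hN
  have hNpos : 0 < N := Finset.prod_pos (fun v _ => (c v).den_pos)
  set m : (Fin (dimn hG φ0) → ℚ) → ℕ := fun v => (c v * N).num.toNat with hm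
  have hmcast : ∀ v ∈ DD hG φ0, ((m v : ℚ)) = c v * N := by
    intro v hv
    obtain ⟨k, hk⟩ := Finset.dvd_prod_of_mem (fun v => (c v).den) hv
    have h1 : c v * ((c v).den : ℚ) = ((c v).num : ℚ) := Rat.mul_den_eq_num _
    have h2 : (c v * N) = (((c v).num * k : ℤ) : ℚ) := by
      rw [hN, hk]
      push_cast
      rw [← mul_assoc, h1]
    have h3 : (0:ℤ) ≤ (c v).num * k :=
      mul_nonneg (Rat.num_nonneg.2 (hc0 v)) (Int.natCast_nonneg k)
    have h4 : ((m v : ℕ) : ℤ) = (c v).num * k := by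
      show ((c v * N).num.toNat : ℤ) = _
      rw [h2, Rat.num_intCast]
      exact Int.toNat_of_nonneg h3
    have h5 : ((m v : ℚ)) = (((m v : ℕ) : ℤ) : ℚ) := by push_cast; ring
    rw [h5, h4]
    exact h2.symm
  have claim2 : ∑ v ∈ DD hG φ0, ((m v : ℚ)) • v = 0 := by
    have he : ∀ v ∈ DD hG φ0, ((m v : ℚ)) • v = (N:ℚ) • (c v • v) := by
      intro v hv
      rw [hmcast v hv, mul_comm, mul_smul]
    rw [Finset.sum_congr rfl he, ← Finset.smul_sum, hcsum, smul_zero]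
  have claim3 : ∀ j, (∑ v ∈ DD hG φ0,
      (m v : ℤ) * ((bas hG φ0).repr (δ v)) j) = 0 := by
    intro j
    have h6 := congrFun claim2 ((beq hG φ0) j)
    rw [Finset.sum_apply] at h6
    simp only [Pi.smul_apply, smul_eq_mul, Pi.zero_apply] at h6
    have h7 : ∀ v ∈ DD hG φ0, ((m v : ℚ)) * v ((beq hG φ0) j)
        = (((m v : ℤ) * ((bas hG φ0).repr (δ v)) j : ℤ) : ℚ) := by
      intro v hv
      have hv2 : v ((beq hG φ0) j) = ((((bas hG φ0).repr (δ v)) j : ℤ) : ℚ) := by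
        conv_lhs => rw [← (hδ v hv).1]
        rw [vec, Equiv.symm_apply_apply]
      rw [hv2]
      push_cast
      ring
    rw [Finset.sum_congr rfl h7] at h6
    exact_mod_cast h6
  have claim4 : (∑ v ∈ DD hG φ0, (m v : ℤ) • δ v) = 0 := by
    apply (bas hG φ0).repr.injective
    rw [map_sum, map_zero]
    ext j
    rw [Finsupp.finset_sum_apply]
    simp only [map_zsmul, Finsupp.smul_apply, smul_eq_mul, Finsupp.coe_zero, Pi.zero_apply]
    exact claim3 j
  have claim5 : (∑ v ∈ DD hG φ0, (m v : ℤ) • ((δ v : Hgrp hG φ0) : GG hG)) = 0 := by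
    have h8 := map_sum ((Hgrp hG φ0).subtype) (fun v => (m v : ℤ) • δ v) (DD hG φ0)
    rw [claim4, map_zero] at h8
    have h9 : ∀ v ∈ DD hG φ0, (Hgrp hG φ0).subtype ((m v : ℤ) • δ v)
        = (m v : ℤ) • ((δ v : Hgrp hG φ0) : GG hG) := by
      intro v _
      rw [map_zsmul]
      rfl
    rw [Finset.sum_congr rfl h9] at h8
    exact h8.symm
  have hposs : 0 < ∑ v ∈ DD hG φ0, (m v : ℤ) • ((δ v : Hgrp hG φ0) : GG hG) := by
    refine Finset.sum_pos' (fun v hv => ?_) ⟨v0, hv0D, ?_⟩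
    · exact zsmul_nonneg (le_of_lt (hδ v hv).2) (Int.natCast_nonneg _)
    · refine zsmul_pos (hδ v0 hv0D).2 ?_
      have h10 : (0:ℚ) < (m v0 : ℚ) := by
        rw [hmcast v0 hv0D]
        exact mul_pos hv0pos (by exact_mod_cast hNpos)
      exact_mod_cast h10
  rw [claim5] at hposs
  exact lt_irrefl 0 hposs

end LK

/- ### Section 7 : the completeness theorem -/

namespace LK

variable {Φ : Set LFormula} (hG : Good Φ) (φ0 : LFormula)

theorem exists_lin : ∃ x, ∀ v ∈ DD hG φ0, 0 < dot v x :=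
  (gordan (dimn hG φ0) (DD hG φ0)).resolve_right (no_dep hG φ0)

end LK

theorem lukasiewicz_completeness' (φ : LFormula)
    (h : ∀ π : ℕ → ℝ, IsValuation π → eval π φ = 1) :
    LProof ∅ φ := by
  classical
  by_contra hφ
  obtain ⟨Φ, hG, hφΦ⟩ := LK.good_of_lindenbaum hφ
  obtain ⟨x, hx⟩ := LK.exists_lin hG φ
  set Fl : LK.Hgrp hG φ → ℚ := fun g => LK.dot (LK.vec hG φ g) x with hFl
  have key : ∀ p ∈ LK.ES hG φ, ∀ q ∈ LK.ES hG φ,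
      ((p : LK.GG hG)) < (q : LK.GG hG) → Fl p < Fl q := by
    intro p hp q hq hlt
    have hD : LK.vec hG φ (q - p) ∈ LK.DD hG φ :=
      Finset.mem_image_of_mem _ (Finset.mem_filter.2 ⟨Finset.mk_mem_product hp hq, hlt⟩)
    have h1 := hx _ hD
    rw [LK.vec_sub, LK.dot_sub_left] at h1
    rw [hFl]
    dsimp only
    linarith
  have keyle : ∀ p ∈ LK.ES hG φ, ∀ q ∈ LK.ES hG φ,
      ((p : LK.GG hG)) ≤ (q : LK.GG hG) → Fl p ≤ Fl q := by
    intro p hp q hq hle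
    rcases eq_or_lt_of_le hle with he | hlt
    · rw [Subtype.ext he]
    · exact le_of_lt (key p hp q hq hlt)
  have hmemEH : ∀ ψ ∈ LK.subf φ, LK.valH hG φ ψ ∈ LK.EH hG φ := by
    intro ψ hψ
    exact Finset.mem_union_left _ (List.mem_toFinset.2 (List.mem_map_of_mem hψ))
  have h0EH : (0 : LK.Hgrp hG φ) ∈ LK.EH hG φ := Finset.mem_union_right _ (by simp)
  have huEH : LK.uH hG φ ∈ LK.EH hG φ := Finset.mem_union_right _ (by simp)
  have hEHES : ∀ p ∈ LK.EH hG φ, p ∈ LK.ES hG φ := fun p hp => Finset.mem_union_left _ hp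
  have haddES : ∀ p ∈ LK.EH hG φ, ∀ q ∈ LK.EH hG φ, p + q ∈ LK.ES hG φ :=
    fun p hp q hq => Finset.mem_union_right _ (Finset.mem_image₂_of_mem hp hq)
  have hzero : Fl 0 = 0 := by
    rw [hFl]
    dsimp only
    have hv0 : LK.vec hG φ 0 = 0 := by funext i; simp [LK.vec]
    rw [hv0, LK.dot_zero_left]
  have hcoe0 : ((0 : LK.Hgrp hG φ) : LK.GG hG) = 0 := rfl
  have hFadd : ∀ p q : LK.Hgrp hG φ, Fl (p + q) = Fl p + Fl q := by
    intro p q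
    rw [hFl]
    dsimp only
    rw [LK.vec_add, LK.dot_add_left]
  have hFsub : ∀ p q : LK.Hgrp hG φ, Fl (p - q) = Fl p - Fl q := by
    intro p q
    rw [hFl]
    dsimp only
    rw [LK.vec_sub, LK.dot_sub_left]
  have hFu : 0 < Fl (LK.uH hG φ) := by
    have h1 := key 0 (hEHES _ h0EH) (LK.uH hG φ) (hEHES _ huEH) (by
      rw [LK.uH_coe, hcoe0]
      exact LK.zero_lt_iota_one)
    rwa [hzero] at h1
  set π : ℕ → ℝ := fun p => if (LFormula.var p) ∈ LK.subf φ then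
      ((Fl (LK.valH hG φ (LFormula.var p)) / Fl (LK.uH hG φ) : ℚ) : ℝ) else 0 with hπ
  have hbounds : ∀ ψ ∈ LK.subf φ, 0 ≤ Fl (LK.valH hG φ ψ) ∧
      Fl (LK.valH hG φ ψ) ≤ Fl (LK.uH hG φ) := by
    intro ψ hψ
    constructor
    · have h1 := keyle 0 (hEHES _ h0EH) _ (hEHES _ (hmemEH ψ hψ)) (by
        rw [LK.valH_coe hG φ hψ, hcoe0]
        exact LK.iota_nonneg _)
      rwa [hzero] at h1
    · exact keyle _ (hEHES _ (hmemEH ψ hψ)) _ (hEHES _ huEH) (by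
        rw [LK.valH_coe hG φ hψ, LK.uH_coe]
        exact LK.iota_le_one _)
  have hπval : IsValuation π := by
    intro p
    rw [hπ]
    dsimp only
    split
    · next hmem =>
        obtain ⟨hb1, hb2⟩ := hbounds _ hmem
        constructor
        · have hq : (0:ℚ) ≤ Fl (LK.valH hG φ (LFormula.var p)) / Fl (LK.uH hG φ) :=
            div_nonneg hb1 (le_of_lt hFu)
          exact_mod_cast hq
        · have hq : Fl (LK.valH hG φ (LFormula.var p)) / Fl (LK.uH hG φ) ≤ 1 :=
            (div_le_one hFu).2 hb2
          exact_mod_cast hq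
    · exact ⟨le_refl _, by norm_num⟩
  have main : ∀ ψ, ψ ∈ LK.subf φ →
      eval π ψ = ((Fl (LK.valH hG φ ψ) / Fl (LK.uH hG φ) : ℚ) : ℝ) := by
    intro ψ
    induction ψ with
    | var p =>
        intro hmem
        show π p = _
        rw [hπ]
        dsimp only
        rw [if_pos hmem]
    | bot =>
        intro hmem
        have h1 : LK.valH hG φ .bot = 0 := by
          apply Subtype.ext
          rw [LK.valH_coe hG φ hmem, hcoe0]
          exact LK.iota_zero
        show (0:ℝ) = _
        rw [h1, hzero]
        norm_num
    | impl α β ihα ihβ =>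
        intro hmem
        have hα := LK.mem_subf_impl_left hmem
        have hβ := LK.mem_subf_impl_right hmem
        have eα := ihα hα
        have eβ := ihβ hβ
        show min 1 (1 - eval π α + eval π β) = _
        rw [eα, eβ]
        by_cases hc : LK.cle hG (LK.mkC hG α) (LK.mkC hG β)
        · have h1 : LK.valH hG φ (.impl α β) = LK.uH hG φ := by
            apply Subtype.ext
            rw [LK.valH_coe hG φ hmem, LK.uH_coe]
            show LK.iota hG (LK.mkC hG (LFormula.impl α β)) = _
            have h2 : LK.mkC hG (LFormula.impl α β) = LK.c1 hG := by
              rw [← LK.cimp_mk]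
              exact (LK.cle_iff_imp_eq_one hG).1 hc
            rw [h2]
          rw [h1, div_self (ne_of_gt hFu), Rat.cast_one]
          have hAB : Fl (LK.valH hG φ α) ≤ Fl (LK.valH hG φ β) :=
            keyle _ (hEHES _ (hmemEH α hα)) _ (hEHES _ (hmemEH β hβ)) (by
              rw [LK.valH_coe hG φ hα, LK.valH_coe hG φ hβ]
              exact LK.iota_mono hc)
          have hq : Fl (LK.valH hG φ α) / Fl (LK.uH hG φ)
              ≤ Fl (LK.valH hG φ β) / Fl (LK.uH hG φ) := by gcongr
          have hr : ((Fl (LK.valH hG φ α) / Fl (LK.uH hG φ) : ℚ) : ℝ)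
              ≤ ((Fl (LK.valH hG φ β) / Fl (LK.uH hG φ) : ℚ) : ℝ) := by exact_mod_cast hq
          rw [min_eq_left (by linarith)]
        · have hba : LK.cle hG (LK.mkC hG β) (LK.mkC hG α) :=
            (LK.cle_total hG _ _).resolve_left hc
          have hL1 := LK.L1G (hG := hG) hba hc
          have h1 : LK.valH hG φ (.impl α β)
              = LK.uH hG φ + LK.valH hG φ β - LK.valH hG φ α := by
            apply Subtype.ext
            rw [LK.valH_coe hG φ hmem]
            push_cast [LK.valH_coe hG φ hα, LK.valH_coe hG φ hβ, LK.uH_coe]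
            show LK.iota hG (LK.mkC hG (LFormula.impl α β)) = _
            have h2 : LK.mkC hG (LFormula.impl α β)
                = LK.cimp hG (LK.mkC hG α) (LK.mkC hG β) := (LK.cimp_mk hG α β).symm
            rw [h2]
            exact eq_sub_of_add_eq hL1
          rw [h1, hFsub, hFadd]
          have hBA : Fl (LK.valH hG φ β) ≤ Fl (LK.valH hG φ α) :=
            keyle _ (hEHES _ (hmemEH β hβ)) _ (hEHES _ (hmemEH α hα)) (by
              rw [LK.valH_coe hG φ hα, LK.valH_coe hG φ hβ]
              exact LK.iota_mono hba)
          have hq : Fl (LK.valH hG φ β) / Fl (LK.uH hG φ)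
              ≤ Fl (LK.valH hG φ α) / Fl (LK.uH hG φ) := by gcongr
          have hr : ((Fl (LK.valH hG φ β) / Fl (LK.uH hG φ) : ℚ) : ℝ)
              ≤ ((Fl (LK.valH hG φ α) / Fl (LK.uH hG φ) : ℚ) : ℝ) := by exact_mod_cast hq
          rw [min_eq_right (by linarith)]
          have hFune : ((Fl (LK.uH hG φ) : ℝ)) ≠ 0 := by
            exact_mod_cast ne_of_gt hFu
          push_cast
          all_goals field_simp
          all_goals ring
    | conj α β ihα ihβ =>
        intro hmem
        have hα := LK.mem_subf_conj_left hmem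
        have hβ := LK.mem_subf_conj_right hmem
        have eα := ihα hα
        have eβ := ihβ hβ
        show max 0 (eval π α + eval π β - 1) = _
        rw [eα, eβ]
        have hsumES : LK.valH hG φ α + LK.valH hG φ β ∈ LK.ES hG φ :=
          haddES _ (hmemEH α hα) _ (hmemEH β hβ)
        have hsumcoe : ((LK.valH hG φ α + LK.valH hG φ β : LK.Hgrp hG φ) : LK.GG hG)
            = LK.iota hG (LK.mkC hG α) + LK.iota hG (LK.mkC hG β) := by
          push_cast [LK.valH_coe hG φ hα, LK.valH_coe hG φ hβ]
          rfl
        by_cases hc : LK.cle hG (LK.mkC hG α) (LK.cneg hG (LK.mkC hG β))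
        · have h1 : LK.valH hG φ (.conj α β) = 0 := by
            apply Subtype.ext
            rw [LK.valH_coe hG φ hmem, hcoe0]
            show LK.iota hG (LK.mkC hG (LFormula.conj α β)) = 0
            have h2 : LK.mkC hG (LFormula.conj α β) = LK.c0 hG := by
              rw [← LK.cconj_mk]
              exact (LK.cmul_eq_zero_iff hG).2 hc
            rw [h2, LK.iota_zero]
          rw [h1, hzero]
          have hle1 : Fl (LK.valH hG φ α) + Fl (LK.valH hG φ β) ≤ Fl (LK.uH hG φ) := by
            have h3 := keyle _ hsumES _ (hEHES _ huEH) (by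
              rw [hsumcoe, LK.uH_coe]
              exact LK.L2G hc)
            rwa [hFadd] at h3
          have hq : Fl (LK.valH hG φ α) / Fl (LK.uH hG φ)
              + Fl (LK.valH hG φ β) / Fl (LK.uH hG φ) ≤ 1 := by
            rw [← add_div, div_le_one hFu]
            exact hle1
          have hr : ((Fl (LK.valH hG φ α) / Fl (LK.uH hG φ) : ℚ) : ℝ)
              + ((Fl (LK.valH hG φ β) / Fl (LK.uH hG φ) : ℚ) : ℝ) ≤ 1 := by
            exact_mod_cast hq
          rw [max_eq_left (by linarith)]
          norm_num
        · have hL3 := LK.L3G (hG := hG) hc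
          have h1 : LK.valH hG φ (.conj α β)
              = LK.valH hG φ α + LK.valH hG φ β - LK.uH hG φ := by
            apply Subtype.ext
            rw [LK.valH_coe hG φ hmem]
            push_cast [LK.valH_coe hG φ hα, LK.valH_coe hG φ hβ, LK.uH_coe]
            show LK.iota hG (LK.mkC hG (LFormula.conj α β)) = _
            have h2 : LK.mkC hG (LFormula.conj α β)
                = LK.cconj hG (LK.mkC hG α) (LK.mkC hG β) := (LK.cconj_mk hG α β).symm
            rw [h2]
            exact eq_sub_of_add_eq hL3
          rw [h1, hFsub, hFadd]
          have hge1 : Fl (LK.uH hG φ) ≤ Fl (LK.valH hG φ α) + Fl (LK.valH hG φ β) := by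
            have h3 := keyle _ (hEHES _ huEH) _ hsumES (by
              rw [hsumcoe, LK.uH_coe]
              exact LK.L3Gpre hc)
            rwa [hFadd] at h3
          have hq : (1:ℚ) ≤ Fl (LK.valH hG φ α) / Fl (LK.uH hG φ)
              + Fl (LK.valH hG φ β) / Fl (LK.uH hG φ) := by
            rw [← add_div, le_div_iff₀ hFu, one_mul]
            exact hge1
          have hr : (1:ℝ) ≤ ((Fl (LK.valH hG φ α) / Fl (LK.uH hG φ) : ℚ) : ℝ)
              + ((Fl (LK.valH hG φ β) / Fl (LK.uH hG φ) : ℚ) : ℝ) := by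
            exact_mod_cast hq
          rw [max_eq_right (by linarith)]
          have hFune : ((Fl (LK.uH hG φ) : ℝ)) ≠ 0 := by
            exact_mod_cast ne_of_gt hFu
          push_cast
          all_goals field_simp
          all_goals ring
  have hfin := main φ (LK.self_mem_subf φ)
  have h1 := h π hπval
  rw [hfin] at h1
  have hne : LK.mkC hG φ ≠ LK.c1 hG := fun hc => hφΦ ((LK.eq_one_iff hG).1 hc)
  have hlt : Fl (LK.valH hG φ φ) < Fl (LK.uH hG φ) :=
    key _ (hEHES _ (hmemEH φ (LK.self_mem_subf φ))) _ (hEHES _ huEH) (by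
      rw [LK.valH_coe hG φ (LK.self_mem_subf φ), LK.uH_coe]
      exact LK.iota_strict (LK.cle_one hG _) hne)
  have h2 : (Fl (LK.valH hG φ φ) / Fl (LK.uH hG φ) : ℚ) = 1 := by exact_mod_cast h1
  rw [div_eq_one_iff_eq (ne_of_gt hFu)] at h2
  exact absurd h2 (ne_of_lt hlt)

/-- (Theorem 4, Completeness) If `V(φ) = 1` for every valuation `V`, then `⊢ φ`. -/
theorem lukasiewicz_completeness (φ : LFormula)
    (h : ∀ π : ℕ → ℝ, IsValuation π → eval π φ = 1) :
    LProof ∅ φ := lukasiewicz_completeness' φ h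
end

section
/- (Lemma 2(ii)-1) If Φ is a maximal consistent set of formulas of propositional Łukasiewicz logic, then for all formulas φ and ψ: φ & ψ ∈ Φ if and only if φ ∈ Φ and ψ ∈ Φ. -/
section Aux

open LFormula

/-- Provability from the empty premise set. -/
abbrev Thm (f : LFormula) : Prop := LProof ∅ f

lemma Thm.trans {a b c : LFormula} (h1 : Thm (a.impl b)) (h2 : Thm (b.impl c)) :
    Thm (a.impl c) :=
  LProof.mp (LProof.mp (LProof.a1 a b c) h1) h2

lemma thm_wk (a b : LFormula) : Thm (a.impl (b.impl a)) :=
  LProof.mp (LProof.a5b a b a) (LProof.a2 a b)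

lemma thm_pair (x y : LFormula) : Thm (x.impl (y.impl (y.conj x))) :=
  LProof.mp (LProof.a5b x y (y.conj x)) (LProof.a3 x y)

lemma thm_exch {x y z : LFormula} (h : Thm (x.impl (y.impl z))) :
    Thm (y.impl (x.impl z)) :=
  LProof.mp (LProof.a5b y x z)
    (Thm.trans (LProof.a3 y x) (LProof.mp (LProof.a5a x y z) h))

lemma thm_id (a : LFormula) : Thm (a.impl a) :=
  LProof.mp (thm_exch (thm_wk a ((bot.conj bot).impl bot))) (LProof.a2 bot bot)

lemma thm_mono_right {b b' : LFormula} (a : LFormula) (h : Thm (b.impl b')) :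
    Thm ((a.conj b).impl (a.conj b')) :=
  Thm.trans (LProof.a3 a b)
    (LProof.mp (LProof.a5a b a (a.conj b')) (Thm.trans h (thm_pair b' a)))

lemma thm_mono_left {a a' : LFormula} (b : LFormula) (h : Thm (a.impl a')) :
    Thm ((a.conj b).impl (a'.conj b)) :=
  Thm.trans (LProof.a3 a b) (Thm.trans (thm_mono_right b h) (LProof.a3 b a'))

lemma thm_mono_both {a a' b b' : LFormula} (h1 : Thm (a.impl a'))
    (h2 : Thm (b.impl b')) : Thm ((a.conj b).impl (a'.conj b')) :=
  Thm.trans (thm_mono_left b h1) (thm_mono_right a' h2)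

lemma thm_assoc (x y z : LFormula) :
    Thm ((x.conj (y.conj z)).impl ((x.conj y).conj z)) := by
  set T := (x.conj y).conj z with hT
  have s1 : Thm ((x.conj y).impl (z.impl T)) :=
    thm_exch (thm_pair z (x.conj y))
  have s2 : Thm (x.impl (y.impl (z.impl T))) :=
    LProof.mp (LProof.a5b x y (z.impl T)) s1
  have s3 : Thm (x.impl ((y.conj z).impl T)) :=
    Thm.trans s2 (LProof.a5a y z T)
  exact LProof.mp (LProof.a5a x (y.conj z) T) s3

/-- Conjunction of a list (junk value for the empty list). -/
def cl : List LFormula → LFormula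
  | [] => LFormula.bot
  | a :: l => listConj a l

lemma cl_cons (a : LFormula) {l : List LFormula} (h : l ≠ []) :
    cl (a :: l) = a.conj (cl l) := by
  cases l with
  | nil => exact absurd rfl h
  | cons b l => simp [cl, listConj]

lemma thm_app_imp : ∀ (L1 : List LFormula), L1 ≠ [] → ∀ (L2 : List LFormula),
    L2 ≠ [] → Thm ((cl (L1 ++ L2)).impl ((cl L1).conj (cl L2)))
  | [], h, _, _ => absurd rfl h
  | [a], _, L2, h2 => by
      rw [show ([a] ++ L2) = a :: L2 by simp, cl_cons a h2]
      exact thm_id _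
  | a :: b :: L1, _, L2, h2 => by
      have ih := thm_app_imp (b :: L1) (by simp) L2 h2
      have e1 : cl ((a :: b :: L1) ++ L2) = a.conj (cl ((b :: L1) ++ L2)) := by
        rw [show ((a :: b :: L1) ++ L2) = a :: ((b :: L1) ++ L2) by simp,
          cl_cons a (by simp)]
      rw [e1, cl_cons a (by simp)]
      exact Thm.trans (thm_mono_right a ih) (thm_assoc a (cl (b :: L1)) (cl L2))

lemma join_ne {g : LFormula → List LFormula} (hg : ∀ a, g a ≠ [])
    {L : List LFormula} (hL : L ≠ []) : (L.map g).flatten ≠ [] := by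
  cases L with
  | nil => exact absurd rfl hL
  | cons a L =>
      simp only [List.map_cons, List.flatten_cons]
      intro he
      exact hg a (List.append_eq_nil_iff.mp he).1

lemma thm_join_imp (g : LFormula → List LFormula) (hg : ∀ a, g a ≠ [])
    (hi : ∀ a, Thm ((cl (g a)).impl a)) :
    ∀ L : List LFormula, L ≠ [] → Thm ((cl ((L.map g).flatten)).impl (cl L))
  | [], h => absurd rfl h
  | [a], _ => by
      simp only [List.map_cons, List.map_nil, List.flatten_cons, List.flatten_nil,
        List.append_nil]
      exact hi a
  | a :: b :: L, _ => by
      have ih := thm_join_imp g hg hi (b :: L) (by simp)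
      have hJ : ((b :: L).map g).flatten ≠ [] := join_ne hg (by simp)
      have e1 : ((a :: b :: L).map g).flatten = g a ++ ((b :: L).map g).flatten := by
        simp [List.flatten_cons]
      rw [e1, cl_cons a (l := b :: L) (by simp)]
      refine Thm.trans (thm_app_imp (g a) (hg a) _ hJ) ?_
      exact thm_mono_both (hi a) ih

/-- Key lemma: in a maximal consistent set, if the conjunction of a nonempty
list of members provably implies `σ`, then `σ ∈ Φ`. -/
lemma key_mem {Φ : Set LFormula} (h : MaximalConsistent Φ) (σ : LFormula)
    (w : List LFormula) (hw : w ≠ []) (hwΦ : ∀ b ∈ w, b ∈ Φ)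
    (himp : Thm ((cl w).impl σ)) : σ ∈ Φ := by
  classical
  by_contra hn
  have hinc := h.2 σ hn
  unfold Consistent at hinc
  push_neg at hinc
  obtain ⟨χ, l, hχ, hl, hp⟩ := hinc
  -- replacement function
  set g : LFormula → List LFormula := fun a => if a = σ then w else [a] with hgdef
  have hg : ∀ a, g a ≠ [] := by
    intro a; by_cases ha : a = σ <;> simp [hgdef, ha, hw]
  have hi : ∀ a, Thm ((cl (g a)).impl a) := by
    intro a; by_cases ha : a = σ
    · subst ha; simpa [hgdef] using himp
    · simp only [hgdef, if_neg ha]; exact thm_id a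
  have himpl : Thm ((cl (((χ :: l).map g).flatten)).impl (cl (χ :: l))) :=
    thm_join_imp g hg hi (χ :: l) (by simp)
  have hnegJ : Thm (cl (((χ :: l).map g).flatten)).neg :=
    Thm.trans himpl hp
  have hJne : ((χ :: l).map g).flatten ≠ [] := join_ne hg (by simp)
  have hmemJ : ∀ b ∈ ((χ :: l).map g).flatten, b ∈ Φ := by
    intro b hb
    rw [List.mem_flatten] at hb
    obtain ⟨l', hl', hbl'⟩ := hb
    rw [List.mem_map] at hl'
    obtain ⟨a, ha, rfl⟩ := hl'
    have haΦ : a ∈ Φ ∪ {σ} := by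
      rcases List.mem_cons.mp ha with rfl | ha
      · exact hχ
      · exact hl a ha
    by_cases haσ : a = σ
    · rw [hgdef] at hbl'; simp only [if_pos haσ] at hbl'
      exact hwΦ b hbl'
    · rw [hgdef] at hbl'; simp only [if_neg haσ, List.mem_singleton] at hbl'
      subst hbl'
      rcases haΦ with h' | h'
      · exact h'
      · exact absurd h' haσ
  obtain ⟨jh, jt, hJ⟩ : ∃ jh jt, ((χ :: l).map g).flatten = jh :: jt := by
    cases hJl : ((χ :: l).map g).flatten with
    | nil => exact absurd hJl hJne
    | cons jh jt => exact ⟨jh, jt, rfl⟩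
  rw [hJ] at hnegJ hmemJ
  exact h.1 jh jt (hmemJ jh (by simp)) (fun b hb => hmemJ b (by simp [hb]))
    hnegJ

end Aux

/-- (Lemma 2(ii)-1) In a maximal consistent set, `φ & ψ ∈ Φ` iff `φ ∈ Φ` and `ψ ∈ Φ`. -/
theorem maximal_conj_mem (Φ : Set LFormula) (h : MaximalConsistent Φ)
    (φ ψ : LFormula) :
    φ.conj ψ ∈ Φ ↔ (φ ∈ Φ ∧ ψ ∈ Φ) := by
  constructor
  · intro hc
    constructor
    · exact key_mem h φ [φ.conj ψ] (by simp) (by simpa using hc)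
        (LProof.a2 φ ψ)
    · exact key_mem h ψ [φ.conj ψ] (by simp) (by simpa using hc)
        (Thm.trans (LProof.a3 φ ψ) (LProof.a2 ψ φ))
  · rintro ⟨h1, h2⟩
    exact key_mem h (φ.conj ψ) [φ, ψ] (by simp)
      (by
        intro b hb
        simp only [List.mem_cons, List.not_mem_nil, or_false] at hb
        rcases hb with rfl | rfl
        exacts [h1, h2])
      (thm_id _)
end
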